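/- arXiv:2306.08597 — 7 statements merged into one kernel-verified Lean document; each statement's English description precedes it below -/
import Mathlib

section
/- Let S ⊆ [n] be nonempty, s ∈ S, d = s − #{i ∈ S : i ≤ s}, and fix 0 ≤ k < d and J ⊆ [n]. Then r_{SM_n(S^{(k+1,s)})}(J) − r_{SM_n(S^{(k,s)})}(J) ∈ {0, 1}. Moreover, if r_{SM_n(S^{(k+1,s)})}(J) = r_{SM_n(S^{(k,s)})}(J), then: r_{SM_n(S^{(k'+1,s)})}(J) = r_{SM_n(S^{(k',s)})}(J) for every k' with k ≤ k' < d, and r_{SM_n(S^{(k+1,s)})}(J') = r_{SM_n(S^{(k,s)})}(J') for every J' ⊆ J. -/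
open MvPolynomial

noncomputable section

/-- The defining recursion for the family of Grothendieck polynomials of permutations of `Fin n`
(written with 0-based positions): `G w₀ = x₀^{n-1} x₁^{n-2} ⋯`, and whenever `w j < w (j+1)`,
`(x_j - x_{j+1}) * G w = f - s_j · f` where `f = (1 - x_{j+1}) * G (w s_j)`. -/
def IsGrothendieck (n : ℕ) (G : Equiv.Perm (Fin n) → MvPolynomial (Fin n) ℤ) : Prop :=
  G Fin.revPerm = ∏ i : Fin n, X i ^ (n - 1 - (i : ℕ)) ∧
    ∀ (w : Equiv.Perm (Fin n)) (j j' : Fin n), (j : ℕ) + 1 = (j' : ℕ) → w j < w j' →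
      (X j - X j') * G w =
        (1 - X j') * G (w * Equiv.swap j j') -
          rename (⇑(Equiv.swap j j')) ((1 - X j') * G (w * Equiv.swap j j'))

/-- `w` is vexillary: it avoids the pattern 2143. -/
def Vexillary {n : ℕ} (w : Equiv.Perm (Fin n)) : Prop :=
  ¬∃ i j k l : Fin n, i < j ∧ j < k ∧ k < l ∧ w j < w i ∧ w i < w l ∧ w l < w k

/-- The Rothe diagram of `w`, as a set of (row, column) pairs with 1-based indexing:
`D(w) = {(i,j) : i < w⁻¹(j), j < w(i)}`. -/
def RotheDiagram (n : ℕ) (w : Equiv.Perm (Fin n)) : Finset (ℕ × ℕ) :=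
  Finset.image (fun p : Fin n × Fin n => ((p.1 : ℕ) + 1, (p.2 : ℕ) + 1))
    (Finset.univ.filter fun p : Fin n × Fin n => p.1 < w.symm p.2 ∧ p.2 < w p.1)

/-- The rank function of the Rothe diagram: `r(i,j) = #{k < i : w(k) < j}` (1-based). -/
def RotheRank (n : ℕ) (w : Equiv.Perm (Fin n)) (s : ℕ × ℕ) : ℤ :=
  ((Finset.univ.filter fun k : Fin n => (k : ℕ) + 1 < s.1 ∧ (w k : ℕ) + 1 < s.2).card : ℤ)

/-- Two squares are linked with respect to the Rothe rank function:
`i - i' = r(i,j) - r(i',j')`. -/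
def RLinked (n : ℕ) (w : Equiv.Perm (Fin n)) (s t : ℕ × ℕ) : Prop :=
  (s.1 : ℤ) - (t.1 : ℤ) = RotheRank n w s - RotheRank n w t

/-- A bubbling diagram: a diagram `D` of squares (row ≥ 1, 1-based), a nonnegative rank
function `r` and a set `F ⊆ D` of dead squares, such that every dead square has a live square
strictly above it in its column with the prescribed rank difference to the closest such, and
dead squares in the same row have distinct ranks. -/
structure BubblingDiagram where
  D : Finset (ℕ × ℕ)
  r : ℕ × ℕ → ℤ
  F : Finset (ℕ × ℕ)
  F_subset : F ⊆ D
  r_nonneg : ∀ s ∈ D, 0 ≤ r s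
  dead_live_above : ∀ s ∈ F, ∃ i' < s.1, (i', s.2) ∈ D ∧ (i', s.2) ∉ F
  dead_rank : ∀ s ∈ F, ∀ i' < s.1, (i', s.2) ∈ D → (i', s.2) ∉ F →
    (∀ i'', i' < i'' → i'' < s.1 → (i'', s.2) ∈ D → (i'', s.2) ∈ F) →
    r s - r (i', s.2) = (s.1 : ℤ) - (i' : ℤ)
  dead_distinct : ∀ s ∈ F, ∀ t ∈ F, s.1 = t.1 → s.2 ≠ t.2 → r s ≠ r t

/-- A bubbling move: a live square `(i,j)` with `(i-1,j)` empty moves up one row,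
its rank decreasing by one. -/
def IsBubbleMove (B C : BubblingDiagram) : Prop :=
  ∃ i j : ℕ, 2 ≤ i ∧ (i, j) ∈ B.D ∧ (i, j) ∉ B.F ∧ (i - 1, j) ∉ B.D ∧
    C.D = insert (i - 1, j) (B.D.erase (i, j)) ∧ C.F = B.F ∧
    C.r = Function.update B.r (i - 1, j) (B.r (i, j) - 1)

/-- A K-bubbling move: a live square `(i,j)` with `(i-1,j)` empty, and such that no dead square
in row `i` has the same rank as `(i,j)`, moves up one row (rank decreasing by one), leaving
behind a dead copy of itself. -/
def IsKBubbleMove (B C : BubblingDiagram) : Prop :=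
  ∃ i j : ℕ, 2 ≤ i ∧ (i, j) ∈ B.D ∧ (i, j) ∉ B.F ∧ (i - 1, j) ∉ B.D ∧
    (∀ k : ℕ, (i, k) ∈ B.F → B.r (i, k) ≠ B.r (i, j)) ∧
    C.D = insert (i - 1, j) B.D ∧ C.F = insert (i, j) B.F ∧
    C.r = Function.update B.r (i - 1, j) (B.r (i, j) - 1)

/-- `C ∈ BD(B)`: `C` is obtainable from `B` by finitely many bubbling and K-bubbling moves. -/
def InBD (B C : BubblingDiagram) : Prop :=
  Relation.ReflTransGen (fun P Q => IsBubbleMove P Q ∨ IsKBubbleMove P Q) B C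

/-- The Rothe bubbling diagram `𝒟(w) = (D(w), r_{D(w)}, ∅)`. -/
def RotheBD (n : ℕ) (w : Equiv.Perm (Fin n)) : BubblingDiagram where
  D := RotheDiagram n w
  r := RotheRank n w
  F := ∅
  F_subset := Finset.empty_subset _
  r_nonneg := fun _ _ => Int.natCast_nonneg _
  dead_live_above := by simp
  dead_rank := by simp
  dead_distinct := by simp

/-- The weight of a diagram: its `i`-th coordinate is the number of squares in row `i+1`
(1-based row `i+1` corresponds to `i : Fin n`). -/
def diagWt (n : ℕ) (D : Finset (ℕ × ℕ)) (i : Fin n) : ℕ :=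
  (D.filter fun s => s.1 = (i : ℕ) + 1).card

/-- Gale order on finite sets of naturals: same cardinality, and the `m`-th smallest element
of `R` is at most the `m`-th smallest element of `S`, for every `m`. -/
def galeLE (R S : Finset ℕ) : Prop :=
  R.card = S.card ∧ ∀ m < R.card, (R.sort (· ≤ ·)).getD m 0 ≤ (S.sort (· ≤ ·)).getD m 0

/-- Column `j` of a diagram: the set of rows of its squares in column `j`. -/
def diagCol (D : Finset (ℕ × ℕ)) (j : ℕ) : Finset ℕ :=
  (D.filter fun s => s.2 = j).image Prod.fst

/-- Columnwise Gale order on diagrams. -/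
def diagLE (C D : Finset (ℕ × ℕ)) : Prop := ∀ j : ℕ, galeLE (diagCol C j) (diagCol D j)

/-- The diagram lies in the grid `[n] × [n]` (1-based). -/
def InGrid (n : ℕ) (D : Finset (ℕ × ℕ)) : Prop :=
  ∀ s ∈ D, s.1 ∈ Finset.Icc 1 n ∧ s.2 ∈ Finset.Icc 1 n

/-- M-convexity of a set of lattice points. -/
def MConvex {m : ℕ} (S : Set (Fin m → ℤ)) : Prop :=
  ∀ x ∈ S, ∀ y ∈ S, ∀ i : Fin m, y i < x i →
    ∃ j : Fin m, x j < y j ∧ (x - Pi.single i 1 + Pi.single j 1) ∈ S ∧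
      (y - Pi.single j 1 + Pi.single i 1) ∈ S

open Classical in
/-- The rank function of the Schubert matroid `SM_n(I)`: the bases are the `B ⊆ [n]` with
`B ≤ I` in Gale order, and `rank J = max {#(J ∩ B) : B a basis}`. -/
def schubertRank (n : ℕ) (I J : Finset ℕ) : ℕ :=
  ((Finset.Icc 1 n).powerset.filter fun B => galeLE B I).sup fun B => (J ∩ B).card

/-- The Schubert matroid polytope `P(SM_n(I)) ⊆ ℝⁿ`: the convex hull of the 0/1 indicator
vectors of the bases of `SM_n(I)` (coordinate `i : Fin n` stands for the element `i+1`). -/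
def schubertPolytope (n : ℕ) (I : Finset ℕ) : Set (Fin n → ℝ) :=
  convexHull ℝ {v | ∃ B : Finset ℕ, B ⊆ Finset.Icc 1 n ∧ galeLE B I ∧
    v = fun i : Fin n => if (i : ℕ) + 1 ∈ B then (1 : ℝ) else 0}

/-- A Schubitope: a finite Minkowski sum of Schubert matroid polytopes of nonempty
subsets of `[n]`. -/
def IsSchubitope (n : ℕ) (P : Set (Fin n → ℝ)) : Prop :=
  ∃ (k : ℕ) (I : Fin k → Finset ℕ), (∀ j, (I j).Nonempty ∧ I j ⊆ Finset.Icc 1 n) ∧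
    P = {x | ∃ p : Fin k → Fin n → ℝ, (∀ j, p j ∈ schubertPolytope n (I j)) ∧ x = ∑ j, p j}

/-- A generalized permutahedron: the polytope cut out by a submodular function `z`
with `z(∅) = 0`. -/
def IsGenPermutahedron {m : ℕ} (P : Set (Fin m → ℝ)) : Prop :=
  ∃ z : Finset (Fin m) → ℝ, z ∅ = 0 ∧
    (∀ A B : Finset (Fin m), z (A ∪ B) + z (A ∩ B) ≤ z A + z B) ∧
    P = {t | (∀ A : Finset (Fin m), ∑ i ∈ A, t i ≤ z A) ∧ ∑ i, t i = z Finset.univ}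

/-- The padding sets `S^{(k,s)}`: `S^{(0,s)} = S` and `S^{(k,s)}` is obtained from
`S^{(k-1,s)}` by inserting the largest `i ∈ [1, s)` not already present (when one exists). -/
def pad (S : Finset ℕ) (s : ℕ) : ℕ → Finset ℕ
  | 0 => S
  | k + 1 =>
      if h : ((Finset.Ico 1 s).filter fun i => i ∉ pad S s k).Nonempty then
        insert (((Finset.Ico 1 s).filter fun i => i ∉ pad S s k).max' h) (pad S s k)
      else pad S s k

/-- `d = s - #{i ∈ S : i ≤ s}`. -/
def padDepth (S : Finset ℕ) (s : ℕ) : ℕ := s - (S.filter fun i => i ≤ s).card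

/-- The order `I ≺ J`: `max (I \ J) ≤ max (J \ I)` (with the convention `max ∅ = 0`). -/
def maxPrec (I J : Finset ℕ) : Prop := (I \ J).sup id ≤ (J \ I).sup id

/-- Rows of the live squares of column `j` of a bubbling diagram. -/
def liveCol (B : BubblingDiagram) (j : ℕ) : Finset ℕ :=
  ((B.D \ B.F).filter fun s => s.2 = j).image Prod.fst

/-- The row of the `a`-th highest live square of column `j` (`a` is 1-based; highest means
smallest row index). -/
def nthLiveRow (B : BubblingDiagram) (j a : ℕ) : ℕ :=
  ((liveCol B j).sort (· ≤ ·)).getD (a - 1) 0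

/-- The number of squares of `D` strictly below `s` in its column. -/
def belowCount (D : Finset (ℕ × ℕ)) (s : ℕ × ℕ) : ℕ :=
  (D.filter fun t => t.2 = s.2 ∧ s.1 < t.1).card

/-- The total order `≺` on the squares of a diagram: lower rows first; within a row, fewer
squares below first; ties broken by smaller column index. -/
def sqPrec (D : Finset (ℕ × ℕ)) (s t : ℕ × ℕ) : Prop :=
  t.1 < s.1 ∨ (s.1 = t.1 ∧ belowCount D s < belowCount D t) ∨
    (s.1 = t.1 ∧ belowCount D s = belowCount D t ∧ s.2 < t.2)

end

-- bridging lemma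
lemma list_filter_length (p : ℕ → Prop) [DecidablePred p] (l : List ℕ) :
    (l.filter (fun x => decide (p x))).length
      = ((Finset.range l.length).filter fun m => p (l.getD m 0)).card := by
  induction l with
  | nil => simp
  | cons a l ih =>
    rw [List.filter_cons]
    simp only [List.length_cons, Finset.card_filter] at *
    rw [Finset.sum_range_succ']
    simp only [List.getD_cons_succ, List.getD_cons_zero]
    by_cases h : p a
    · rw [if_pos (by simpa using h), if_pos h, List.length_cons, ih]
    · rw [if_neg (by simpa using h), if_neg h, ih, add_zero]

def cnt (R : Finset ℕ) (t : ℕ) : ℕ := (R.filter fun x => t < x).card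

lemma cnt_eq (R : Finset ℕ) (t : ℕ) :
    cnt R t = ((Finset.range R.card).filter fun m => t < (R.sort (· ≤ ·)).getD m 0).card := by
  have h1 : cnt R t = ((R.sort (· ≤ ·)).filter (fun x => decide (t < x))).length := by
    rw [cnt]
    have : (Finset.filter (fun x => t < x) R).val = Multiset.filter (fun x => t < x) R.val :=
      Finset.filter_val _ _
    rw [Finset.card, this, ← Finset.sort_eq R (· ≤ ·), Multiset.filter_coe, Multiset.coe_card]
  rw [h1, list_filter_length, Finset.length_sort]

lemma sorted_getD_mono {l : List ℕ} (hl : l.Pairwise (· ≤ ·)) {a b : ℕ} (hab : a ≤ b)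
    (hb : b < l.length) : l.getD a 0 ≤ l.getD b 0 := by
  rcases eq_or_lt_of_le hab with rfl | h
  · exact le_refl _
  · rw [List.getD_eq_getElem l 0 (lt_trans h hb), List.getD_eq_getElem l 0 hb]
    exact List.Pairwise.rel_get_of_lt hl h

lemma galeLE_cnt {R S : Finset ℕ} (h : galeLE R S) (t : ℕ) : cnt R t ≤ cnt S t := by
  obtain ⟨hc, hm⟩ := h
  rw [cnt_eq, cnt_eq, ← hc]
  apply Finset.card_le_card
  intro m hmem
  rw [Finset.mem_filter] at hmem ⊢
  exact ⟨hmem.1, lt_of_lt_of_le hmem.2 (hm m (Finset.mem_range.mp hmem.1))⟩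

lemma cnt_galeLE {R S : Finset ℕ} (hc : R.card = S.card)
    (h : ∀ t, cnt R t ≤ cnt S t) : galeLE R S := by
  refine ⟨hc, fun m hm => ?_⟩
  by_contra hlt
  push_neg at hlt
  set t := (S.sort (· ≤ ·)).getD m 0 with ht
  have h1 : R.card - m ≤ cnt R t := by
    rw [cnt_eq]
    calc R.card - m = ((Finset.range R.card).filter fun m' => m ≤ m').card := by
          have : (Finset.range R.card).filter (fun m' => m ≤ m') = Finset.Ico m R.card := by
            ext x; simp [Finset.mem_range, Finset.mem_Ico]; omega
          rw [this, Nat.card_Ico]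
     _ ≤ _ := by
          apply Finset.card_le_card
          intro m' hmem
          rw [Finset.mem_filter] at hmem ⊢
          refine ⟨hmem.1, lt_of_lt_of_le hlt ?_⟩
          exact sorted_getD_mono (Finset.pairwise_sort _ _) hmem.2
            (by rw [Finset.length_sort]; exact Finset.mem_range.mp hmem.1)
  have h2 : cnt S t ≤ R.card - m - 1 := by
    rw [cnt_eq, ← hc]
    calc _ ≤ ((Finset.range R.card).filter fun m' => m < m').card := by
          apply Finset.card_le_card
          intro m' hmem
          rw [Finset.mem_filter] at hmem ⊢
          refine ⟨hmem.1, ?_⟩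
          by_contra hle
          push_neg at hle
          exact absurd (sorted_getD_mono (Finset.pairwise_sort _ _) hle
            (by rw [Finset.length_sort, ← hc]; exact hm)) (not_le.mpr hmem.2)
      _ = R.card - m - 1 := by
          have : (Finset.range R.card).filter (fun m' => m < m') = Finset.Ico (m+1) R.card := by
            ext x; simp [Finset.mem_range, Finset.mem_Ico]; omega
          rw [this, Nat.card_Ico]; omega
  have := le_trans h1 (le_trans (h t) h2)
  omega

def gfun (I J : Finset ℕ) (t : ℕ) : ℕ := (J.filter fun x => x ≤ t).card + cnt I t

lemma schubertRank_le_g (n : ℕ) (I J : Finset ℕ) (t : ℕ) : schubertRank n I J ≤ gfun I J t := by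
  classical
  rw [schubertRank]
  apply Finset.sup_le
  intro B hB
  rw [Finset.mem_filter] at hB
  have hsub : J ∩ B ⊆ (J.filter fun x => x ≤ t) ∪ (B.filter fun x => t < x) := by
    intro x hx
    rw [Finset.mem_inter] at hx
    rw [Finset.mem_union, Finset.mem_filter, Finset.mem_filter]
    rcases le_or_gt x t with h | h
    · exact Or.inl ⟨hx.1, h⟩
    · exact Or.inr ⟨hx.2, h⟩
  calc (J ∩ B).card ≤ _ := Finset.card_le_card hsub
    _ ≤ (J.filter fun x => x ≤ t).card + (B.filter fun x => t < x).card :=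
        Finset.card_union_le _ _
    _ ≤ gfun I J t := by
        rw [gfun]
        exact Nat.add_le_add_left (galeLE_cnt hB.2 t) _

lemma cnt_insert {x : ℕ} {R : Finset ℕ} (hx : x ∉ R) (t : ℕ) :
    cnt (insert x R) t = cnt R t + if t < x then 1 else 0 := by
  rw [cnt, cnt, Finset.filter_insert]
  by_cases h : t < x
  · rw [if_pos h, if_pos h, Finset.card_insert_of_notMem (fun hc => hx (Finset.mem_filter.mp hc).1)]
  · rw [if_neg h, if_neg h, add_zero]

lemma gfun_insert {x : ℕ} {I : Finset ℕ} (J : Finset ℕ) (hx : x ∉ I) (t : ℕ) :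
    gfun (insert x I) J t = gfun I J t + if t < x then 1 else 0 := by
  rw [gfun, gfun, cnt_insert hx, add_assoc]

lemma exists_good_B (n : ℕ) (J : Finset ℕ) (hJ : J ⊆ Finset.Icc 1 n) :
    ∀ I : Finset ℕ, I ⊆ Finset.Icc 1 n →
      ∃ B ⊆ Finset.Icc 1 n, B.card = I.card ∧ (∀ t, cnt B t ≤ cnt I t) ∧
        ∃ t, gfun I J t ≤ (J ∩ B).card := by
  classical
  intro I
  induction I using Finset.strongInduction with
  | _ I ih =>
    intro hI
    rcases I.eq_empty_or_nonempty with rfl | hne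
    · refine ⟨∅, by simp, by simp, by simp [cnt], 0, ?_⟩
      rw [gfun]
      have h0 : J.filter (fun x => x ≤ 0) = ∅ := by
        apply Finset.filter_eq_empty_iff.mpr
        intro x hx
        have := hJ hx
        rw [Finset.mem_Icc] at this
        omega
      rw [h0]; simp [cnt]
    · set m := I.max' hne with hmdef
      have hmI : m ∈ I := I.max'_mem hne
      have hmn : 1 ≤ m ∧ m ≤ n := by
        have := hI hmI; rwa [Finset.mem_Icc] at this
      set I₀ := I.erase m with hI0def
      have hmI0 : m ∉ I₀ := Finset.notMem_erase _ _
      have hins : insert m I₀ = I := Finset.insert_erase hmI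
      have hcard0 : I₀.card = I.card - 1 := Finset.card_erase_of_mem hmI
      have hIpos : 1 ≤ I.card := Finset.card_pos.mpr hne
      obtain ⟨B₀, hB₀sub, hB₀card, hB₀cnt, t₀, ht₀⟩ :=
        ih I₀ (Finset.erase_ssubset hmI) (subset_trans (Finset.erase_subset _ _) hI)
      have hIcc : I ⊆ Finset.Icc 1 m := by
        intro y hy
        rw [Finset.mem_Icc]
        have h1 := hI hy; rw [Finset.mem_Icc] at h1
        exact ⟨h1.1, I.le_max' y hy⟩
      -- common construction
      have hcommon : ∀ x ∈ Finset.Icc 1 m, x ∉ B₀ →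
          insert x B₀ ⊆ Finset.Icc 1 n ∧ (insert x B₀).card = I.card ∧
          (∀ t, cnt (insert x B₀) t ≤ cnt I t) := by
        intro x hxm hxB
        rw [Finset.mem_Icc] at hxm
        refine ⟨?_, ?_, ?_⟩
        · intro y hy
          rcases Finset.mem_insert.mp hy with rfl | hy
          · rw [Finset.mem_Icc]; omega
          · exact hB₀sub hy
        · rw [Finset.card_insert_of_notMem hxB, hB₀card]; omega
        · intro t
          rw [cnt_insert hxB, ← hins, cnt_insert hmI0]
          have : (if t < x then 1 else 0) ≤ (if t < m then (1:ℕ) else 0) := by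
            by_cases h : t < x
            · rw [if_pos h, if_pos (lt_of_lt_of_le h hxm.2)]
            · rw [if_neg h]; omega
          exact Nat.add_le_add (hB₀cnt t) this
      by_cases hcase : ∃ x ∈ J, x ≤ m ∧ x ∉ B₀
      · obtain ⟨x, hxJ, hxm, hxB⟩ := hcase
        have hx1 : 1 ≤ x := by have := hJ hxJ; rw [Finset.mem_Icc] at this; omega
        obtain ⟨hs, hc, hcnt⟩ := hcommon x (Finset.mem_Icc.mpr ⟨hx1, hxm⟩) hxB
        refine ⟨insert x B₀, hs, hc, hcnt, t₀, ?_⟩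
        have hJB : (J ∩ insert x B₀).card = (J ∩ B₀).card + 1 := by
          rw [Finset.inter_insert_of_mem hxJ,
            Finset.card_insert_of_notMem (fun hc' => hxB (Finset.mem_inter.mp hc').2)]
        rw [hJB, ← hins, gfun_insert J hmI0]
        have : (if t₀ < m then (1:ℕ) else 0) ≤ 1 := by split <;> omega
        omega
      · push_neg at hcase
        have hnotsub : ¬ (Finset.Icc 1 m ⊆ B₀) := by
          intro hsub
          have h1 : m ≤ B₀.card := by
            have := Finset.card_le_card hsub
            rwa [Nat.card_Icc, Nat.add_sub_cancel] at this
          have h2 : I.card ≤ m := by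
            have := Finset.card_le_card hIcc
            rwa [Nat.card_Icc, Nat.add_sub_cancel] at this
          omega
        obtain ⟨x, hxm, hxB⟩ := Finset.not_subset.mp hnotsub
        obtain ⟨hs, hc, hcnt⟩ := hcommon x hxm hxB
        refine ⟨insert x B₀, hs, hc, hcnt, m, ?_⟩
        have hcntI : cnt I m = 0 := by
          rw [cnt, Finset.card_eq_zero]
          apply Finset.filter_eq_empty_iff.mpr
          intro y hy
          have := hIcc hy; rw [Finset.mem_Icc] at this; omega
        have hfsub : J.filter (fun x => x ≤ m) ⊆ J ∩ insert x B₀ := by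
          intro y hy
          rw [Finset.mem_filter] at hy
          rw [Finset.mem_inter, Finset.mem_insert]
          exact ⟨hy.1, Or.inr (hcase y hy.1 hy.2)⟩
        rw [gfun, hcntI, add_zero]
        exact Finset.card_le_card hfsub

lemma g_le_schubertRank (n : ℕ) (I J : Finset ℕ) (hI : I ⊆ Finset.Icc 1 n)
    (hJ : J ⊆ Finset.Icc 1 n) : ∃ t, gfun I J t ≤ schubertRank n I J := by
  classical
  obtain ⟨B, hBsub, hBcard, hBcnt, t, ht⟩ := exists_good_B n J hJ I hI
  refine ⟨t, le_trans ht ?_⟩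
  rw [schubertRank]
  have hmem : B ∈ (Finset.Icc 1 n).powerset.filter (fun B => galeLE B I) := by
    rw [Finset.mem_filter, Finset.mem_powerset]
    exact ⟨hBsub, cnt_galeLE hBcard hBcnt⟩
  exact Finset.le_sup (f := fun B => (J ∩ B).card) hmem

def padElt (S : Finset ℕ) (s k : ℕ) : ℕ :=
  ((Finset.Ico 1 s).filter fun i => i ∉ pad S s k).sup id

lemma missing_card (S : Finset ℕ) (s : ℕ) (hs1 : ∀ x ∈ S, 1 ≤ x) (hs : s ∈ S) :
    ∀ k, k ≤ padDepth S s →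
      ((Finset.Ico 1 s).filter fun i => i ∉ pad S s k).card = padDepth S s - k := by
  classical
  intro k
  induction k with
  | zero =>
    intro _
    have hsplit := Finset.card_filter_add_card_filter_not
      (s := Finset.Ico 1 s) (p := fun i => i ∈ S)
    have h1 : ((Finset.Ico 1 s).filter fun i => i ∈ S).card = (S.filter fun i => i ≤ s).card - 1 := by
      have he : (Finset.Ico 1 s).filter (fun i => i ∈ S) = S.filter (fun i => i < s) := by
        ext x
        simp only [Finset.mem_filter, Finset.mem_Ico]
        constructor
        · rintro ⟨⟨_, h2⟩, h3⟩; exact ⟨h3, h2⟩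
        · rintro ⟨h3, h2⟩; exact ⟨⟨hs1 x h3, h2⟩, h3⟩
      have he2 : S.filter (fun i => i ≤ s) = insert s (S.filter (fun i => i < s)) := by
        ext x
        simp only [Finset.mem_filter, Finset.mem_insert]
        constructor
        · rintro ⟨h3, h2⟩
          rcases eq_or_lt_of_le h2 with rfl | h
          · exact Or.inl rfl
          · exact Or.inr ⟨h3, h⟩
        · rintro (rfl | ⟨h3, h2⟩)
          · exact ⟨hs, le_refl _⟩
          · exact ⟨h3, le_of_lt h2⟩
      rw [he, he2, Finset.card_insert_of_notMem (by simp)]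
      omega
    rw [pad]
    have hcard : (Finset.Ico 1 s).card = s - 1 := by rw [Nat.card_Ico]
    have hd : padDepth S s = s - (S.filter fun i => i ≤ s).card := rfl
    have hspos : 1 ≤ (S.filter fun i => i ≤ s).card :=
      Finset.card_pos.mpr ⟨s, Finset.mem_filter.mpr ⟨hs, le_refl _⟩⟩
    have hsle : (S.filter fun i => i ≤ s).card ≤ s := by
      have : S.filter (fun i => i ≤ s) ⊆ Finset.Icc 1 s := by
        intro x hx
        rw [Finset.mem_filter] at hx
        rw [Finset.mem_Icc]
        exact ⟨hs1 x hx.1, hx.2⟩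
      have := Finset.card_le_card this
      rwa [Nat.card_Icc, Nat.add_sub_cancel] at this
    omega
  | succ k ih =>
    intro hk
    have hprev := ih (by omega)
    have hne : ((Finset.Ico 1 s).filter fun i => i ∉ pad S s k).Nonempty := by
      rw [← Finset.card_pos, hprev]; omega
    have hstep : pad S s (k+1) =
        insert (((Finset.Ico 1 s).filter fun i => i ∉ pad S s k).max' hne) (pad S s k) := by
      rw [pad, dif_pos hne]
    set i₀ := ((Finset.Ico 1 s).filter fun i => i ∉ pad S s k).max' hne with hi₀
    have hmem := Finset.max'_mem _ hne
    rw [← hi₀] at hmem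
    have herase : ((Finset.Ico 1 s).filter fun i => i ∉ pad S s (k+1)) =
        ((Finset.Ico 1 s).filter fun i => i ∉ pad S s k).erase i₀ := by
      ext x
      rw [hstep]
      simp only [Finset.mem_filter, Finset.mem_erase, Finset.mem_insert]
      tauto
    rw [herase, Finset.card_erase_of_mem hmem, hprev]
    omega

lemma padElt_eq_max' (S : Finset ℕ) (s k : ℕ)
    (hne : ((Finset.Ico 1 s).filter fun i => i ∉ pad S s k).Nonempty) :
    padElt S s k = ((Finset.Ico 1 s).filter fun i => i ∉ pad S s k).max' hne := by
  rw [padElt, Finset.max'_eq_sup', Finset.sup'_eq_sup]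

lemma pad_subset_Icc (S : Finset ℕ) (n s : ℕ) (hS : S ⊆ Finset.Icc 1 n) (hsn : s ≤ n) :
    ∀ k, pad S s k ⊆ Finset.Icc 1 n := by
  intro k
  induction k with
  | zero => exact hS
  | succ k ih =>
    rw [pad]
    split
    · next h =>
      apply Finset.insert_subset _ ih
      have := Finset.max'_mem _ h
      rw [Finset.mem_filter, Finset.mem_Ico] at this
      rw [Finset.mem_Icc]
      omega
    · exact ih

lemma pad_missing_ne (S : Finset ℕ) (s : ℕ) (hs1 : ∀ x ∈ S, 1 ≤ x) (hs : s ∈ S) {k : ℕ}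
    (hk : k < padDepth S s) : ((Finset.Ico 1 s).filter fun i => i ∉ pad S s k).Nonempty := by
  rw [← Finset.card_pos, missing_card S s hs1 hs k (le_of_lt hk)]
  omega

lemma pad_succ_eq (S : Finset ℕ) (s : ℕ) (hs1 : ∀ x ∈ S, 1 ≤ x) (hs : s ∈ S) {k : ℕ}
    (hk : k < padDepth S s) :
    pad S s (k+1) = insert (padElt S s k) (pad S s k) := by
  have hne := pad_missing_ne S s hs1 hs hk
  rw [pad, dif_pos hne, ← padElt_eq_max' S s k hne]

lemma padElt_mem (S : Finset ℕ) (s : ℕ) (hs1 : ∀ x ∈ S, 1 ≤ x) (hs : s ∈ S) {k : ℕ}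
    (hk : k < padDepth S s) :
    padElt S s k ∈ Finset.Ico 1 s ∧ padElt S s k ∉ pad S s k := by
  have hne := pad_missing_ne S s hs1 hs hk
  have := Finset.max'_mem _ hne
  rw [← padElt_eq_max' S s k hne, Finset.mem_filter] at this
  exact this

lemma padElt_decreasing (S : Finset ℕ) (s : ℕ) (hs1 : ∀ x ∈ S, 1 ≤ x) (hs : s ∈ S) {k : ℕ}
    (hk : k < padDepth S s) (hk1 : k + 1 < padDepth S s) :
    padElt S s (k+1) ≤ padElt S s k := by
  have hne := pad_missing_ne S s hs1 hs hk
  have hne1 := pad_missing_ne S s hs1 hs hk1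
  have hmem := Finset.max'_mem _ hne1
  rw [← padElt_eq_max' S s (k+1) hne1, Finset.mem_filter] at hmem
  rw [padElt_eq_max' S s k hne]
  apply Finset.le_max'
  rw [Finset.mem_filter]
  refine ⟨hmem.1, fun hc => hmem.2 ?_⟩
  rw [pad_succ_eq S s hs1 hs hk]
  exact Finset.mem_insert_of_mem hc

lemma key_lemma (n : ℕ) (I J : Finset ℕ) (hJ : J ⊆ Finset.Icc 1 n) (hII : I ⊆ Finset.Icc 1 n)
    (i : ℕ) (hiI : i ∉ I) (hin : i ∈ Finset.Icc 1 n) :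
    (schubertRank n (insert i I) J = schubertRank n I J ∨
       schubertRank n (insert i I) J = schubertRank n I J + 1) ∧
    (schubertRank n (insert i I) J = schubertRank n I J ↔
       ∃ t, i ≤ t ∧ gfun I J t ≤ schubertRank n I J) := by
  have hII' : insert i I ⊆ Finset.Icc 1 n := Finset.insert_subset hin hII
  obtain ⟨t1, h1⟩ := g_le_schubertRank n (insert i I) J hII' hJ
  obtain ⟨t0, h0⟩ := g_le_schubertRank n I J hII hJ
  have hin1 := gfun_insert J hiI t1
  have hin0 := gfun_insert J hiI t0
  have hub1 := schubertRank_le_g n I J t1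
  have hub0' := schubertRank_le_g n (insert i I) J t0
  have hle : schubertRank n I J ≤ schubertRank n (insert i I) J := by
    calc schubertRank n I J ≤ gfun I J t1 := schubertRank_le_g n I J t1
      _ ≤ gfun (insert i I) J t1 := by rw [hin1]; omega
      _ ≤ _ := h1
  constructor
  · have : schubertRank n (insert i I) J ≤ schubertRank n I J + 1 := by
      calc schubertRank n (insert i I) J ≤ gfun (insert i I) J t0 :=
            schubertRank_le_g n (insert i I) J t0
        _ ≤ gfun I J t0 + 1 := by rw [hin0]; split <;> omega
        _ ≤ _ := by omega
    omega
  · constructor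
    · intro heq
      refine ⟨t1, ?_, ?_⟩
      · by_contra hlt
        push_neg at hlt
        rw [if_pos hlt] at hin1
        omega
      · omega
    · rintro ⟨t, hit, hg⟩
      have := schubertRank_le_g n (insert i I) J t  -- not needed
      have h2 : schubertRank n (insert i I) J ≤ gfun (insert i I) J t :=
        schubertRank_le_g n (insert i I) J t
      rw [gfun_insert J hiI t, if_neg (by omega)] at h2
      omega

lemma card_filter_sdiff (J' J : Finset ℕ) (hJ' : J' ⊆ J) (p : ℕ → Prop) [DecidablePred p] :
    (J.filter p).card = (J'.filter p).card + ((J \ J').filter p).card := by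
  rw [← Finset.card_union_of_disjoint, ← Finset.filter_union, Finset.union_sdiff_of_subset hJ']
  exact Finset.disjoint_filter_filter (Finset.disjoint_sdiff)

lemma key_subset (n : ℕ) (I J J' : Finset ℕ) (hJ : J ⊆ Finset.Icc 1 n)
    (hII : I ⊆ Finset.Icc 1 n) (hJ'J : J' ⊆ J) (i : ℕ)
    (h : ∃ t, i ≤ t ∧ gfun I J t ≤ schubertRank n I J) :
    ∃ t, i ≤ t ∧ gfun I J' t ≤ schubertRank n I J' := by
  classical
  obtain ⟨t, hit, hg⟩ := h
  obtain ⟨t', hg'⟩ := g_le_schubertRank n I J' hII (subset_trans hJ'J hJ)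
  rcases le_or_gt i t' with h' | h'
  · exact ⟨t', h', hg'⟩
  · refine ⟨t, hit, ?_⟩
    have hdec : ∀ u, gfun I J u = gfun I J' u + ((J \ J').filter fun x => x ≤ u).card := by
      intro u
      rw [gfun, gfun, card_filter_sdiff J' J hJ'J]
      ring
    have hcmono : ((J \ J').filter fun x => x ≤ t').card ≤ ((J \ J').filter fun x => x ≤ t).card := by
      apply Finset.card_le_card
      intro x hx
      rw [Finset.mem_filter] at hx ⊢
      exact ⟨hx.1, le_trans hx.2 (by omega)⟩
    have hJt' := schubertRank_le_g n I J t'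
    have e1 := hdec t
    have e2 := hdec t'
    omega

theorem stmt_9 (n : ℕ) (S : Finset ℕ) (hS : S ⊆ Finset.Icc 1 n) (hS0 : S.Nonempty)
    (s : ℕ) (hs : s ∈ S) (k : ℕ) (hk : k < padDepth S s)
    (J : Finset ℕ) (hJ : J ⊆ Finset.Icc 1 n) :
    (schubertRank n (pad S s (k + 1)) J = schubertRank n (pad S s k) J ∨
      schubertRank n (pad S s (k + 1)) J = schubertRank n (pad S s k) J + 1) ∧
    (schubertRank n (pad S s (k + 1)) J = schubertRank n (pad S s k) J →
      (∀ k', k ≤ k' → k' < padDepth S s →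
        schubertRank n (pad S s (k' + 1)) J = schubertRank n (pad S s k') J) ∧
      ∀ J' ⊆ J,
        schubertRank n (pad S s (k + 1)) J' = schubertRank n (pad S s k) J') := by
  have hs1 : ∀ x ∈ S, 1 ≤ x := fun x hx => (Finset.mem_Icc.mp (hS hx)).1
  have hsn : s ≤ n := (Finset.mem_Icc.mp (hS hs)).2
  have hpadIcc : ∀ k', pad S s k' ⊆ Finset.Icc 1 n := pad_subset_Icc S n s hS hsn
  have hin : ∀ k', k' < padDepth S s → padElt S s k' ∈ Finset.Icc 1 n := by
    intro k' hk'
    have := (padElt_mem S s hs1 hs hk').1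
    rw [Finset.mem_Ico] at this
    rw [Finset.mem_Icc]
    omega
  have K : ∀ k', (hk' : k' < padDepth S s) → ∀ J₁ : Finset ℕ, J₁ ⊆ Finset.Icc 1 n →
      (schubertRank n (pad S s (k' + 1)) J₁ = schubertRank n (pad S s k') J₁ ∨
        schubertRank n (pad S s (k' + 1)) J₁ = schubertRank n (pad S s k') J₁ + 1) ∧
      (schubertRank n (pad S s (k' + 1)) J₁ = schubertRank n (pad S s k') J₁ ↔
        ∃ t, padElt S s k' ≤ t ∧ gfun (pad S s k') J₁ t ≤ schubertRank n (pad S s k') J₁) := by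
    intro k' hk' J₁ hJ₁
    rw [pad_succ_eq S s hs1 hs hk']
    exact key_lemma n (pad S s k') J₁ hJ₁ (hpadIcc k') (padElt S s k')
      (padElt_mem S s hs1 hs hk').2 (hin k' hk')
  refine ⟨(K k hk J hJ).1, fun heq => ⟨?_, ?_⟩⟩
  · -- propagation
    have Q : ∀ k', k ≤ k' → k' < padDepth S s →
        ∃ t, padElt S s k' ≤ t ∧ gfun (pad S s k') J t ≤ schubertRank n (pad S s k') J := by
      intro k' hkk'
      induction k', hkk' using Nat.le_induction with
      | base => exact fun h => (K k hk J hJ).2.mp heq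
      | succ k' hkk' ih =>
        intro hk1'
        have hk' : k' < padDepth S s := by omega
        obtain ⟨t, ht, hg⟩ := ih hk'
        refine ⟨t, le_trans (padElt_decreasing S s hs1 hs hk' hk1') ht, ?_⟩
        have heq' : schubertRank n (pad S s (k' + 1)) J = schubertRank n (pad S s k') J :=
          (K k' hk' J hJ).2.mpr ⟨t, ht, hg⟩
        rw [pad_succ_eq S s hs1 hs hk', gfun_insert J (padElt_mem S s hs1 hs hk').2,
          if_neg (by omega), add_zero, ← pad_succ_eq S s hs1 hs hk', heq']
        exact hg
    intro k' hkk' hk'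
    exact (K k' hk' J hJ).2.mpr (Q k' hkk' hk')
  · intro J' hJ'J
    exact (K k hk J' (subset_trans hJ'J hJ)).2.mpr
      (key_subset n (pad S s k) J J' hJ (hpadIcc k) hJ'J (padElt S s k)
        ((K k hk J hJ).2.mp heq))
end

section
/- Let S ⊆ [n] be nonempty, s ∈ S, and d = s − #{i ∈ S : i ≤ s}. Then for every 0 ≤ k ≤ d and every I ⊆ [n], r_{SM_n(S^{(k,s)})}(I) = min{ r_{SM_n(S^{(d,s)})}(I), r_{SM_n(S)}(I) + k }. Furthermore, for all J' ⊆ J ⊆ [n], r_{SM_n(S^{(d,s)})}(J) − r_{SM_n(S^{(d,s)})}(J') ≥ r_{SM_n(S)}(J) − r_{SM_n(S)}(J'). -/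
open MvPolynomial

section SchubertAux

/-! Auxiliary definitions and lemmas for `stmt_10`. -/

def pcLe (A : Finset ℕ) (t : ℕ) : ℕ := (A.filter (· ≤ t)).card
def sfx (A : Finset ℕ) (t : ℕ) : ℕ := (A.filter (fun i => t < i)).card

lemma pcLe_add_sfx (A : Finset ℕ) (t : ℕ) : pcLe A t + sfx A t = A.card := by
  classical
  have := Finset.card_filter_add_card_filter_not (s := A) (p := (· ≤ t))
  simpa [pcLe, sfx, not_le] using this

lemma pcLe_mono (A : Finset ℕ) {t u : ℕ} (h : t ≤ u) : pcLe A t ≤ pcLe A u := by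
  apply Finset.card_le_card
  intro x hx
  simp only [Finset.mem_filter] at hx ⊢
  exact ⟨hx.1, hx.2.trans h⟩

lemma sfx_anti (A : Finset ℕ) {t u : ℕ} (h : t ≤ u) : sfx A u ≤ sfx A t := by
  apply Finset.card_le_card
  intro x hx
  simp only [Finset.mem_filter] at hx ⊢
  exact ⟨hx.1, lt_of_le_of_lt h hx.2⟩

lemma pcLe_erase (A : Finset ℕ) {a : ℕ} (ha : a ∈ A) (t : ℕ) :
    pcLe A t = pcLe (A.erase a) t + (if a ≤ t then 1 else 0) := by
  classical
  rw [pcLe, pcLe, Finset.filter_erase]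
  by_cases h : a ≤ t
  · have hmem : a ∈ Finset.filter (fun x => x ≤ t) A := Finset.mem_filter.mpr ⟨ha, h⟩
    have hpos : 0 < (Finset.filter (fun x => x ≤ t) A).card := Finset.card_pos.mpr ⟨a, hmem⟩
    rw [Finset.card_erase_of_mem hmem, if_pos h]
    omega
  · have hnm : a ∉ Finset.filter (fun x => x ≤ t) A := fun hc => h (Finset.mem_filter.mp hc).2
    rw [Finset.erase_eq_of_notMem hnm, if_neg h]
    omega

lemma sfx_erase (A : Finset ℕ) {a : ℕ} (ha : a ∈ A) (t : ℕ) :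
    sfx A t = sfx (A.erase a) t + (if t < a then 1 else 0) := by
  classical
  rw [sfx, sfx, Finset.filter_erase]
  by_cases h : t < a
  · have hmem : a ∈ Finset.filter (fun i => t < i) A := Finset.mem_filter.mpr ⟨ha, h⟩
    have hpos : 0 < (Finset.filter (fun i => t < i) A).card := Finset.card_pos.mpr ⟨a, hmem⟩
    rw [Finset.card_erase_of_mem hmem, if_pos h]
    omega
  · have hnm : a ∉ Finset.filter (fun i => t < i) A := fun hc => h (Finset.mem_filter.mp hc).2
    rw [Finset.erase_eq_of_notMem hnm, if_neg h]
    omega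

lemma countP_sort (A : Finset ℕ) (t : ℕ) :
    (A.sort (· ≤ ·)).countP (fun x => decide (x ≤ t)) = pcLe A t := by
  classical
  have h1 : pcLe A t = Multiset.countP (· ≤ t) A.1 := by
    rw [pcLe, Multiset.countP_eq_card_filter]
    rfl
  rw [h1, ← Finset.sort_eq A (· ≤ ·), Multiset.coe_countP]

lemma sorted_getD_le_iff {l : List ℕ} (hl : l.Pairwise (· ≤ ·)) {m : ℕ} (hm : m < l.length) (t : ℕ) :
    l.getD m 0 ≤ t ↔ m < l.countP (fun x => decide (x ≤ t)) := by
  rw [List.getD_eq_getElem l 0 hm]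
  have hrel : ∀ i j : ℕ, (hi : i < l.length) → (hj : j < l.length) → i ≤ j → l[i] ≤ l[j] := by
    intro i j hi hj hij
    rcases eq_or_lt_of_le hij with rfl | h
    · exact le_refl _
    · exact List.pairwise_iff_get.mp hl ⟨i, hi⟩ ⟨j, hj⟩ h
  constructor
  · intro h
    have hsplit : l.countP (fun x => decide (x ≤ t)) =
        (l.take (m+1)).countP (fun x => decide (x ≤ t)) +
        (l.drop (m+1)).countP (fun x => decide (x ≤ t)) := by
      rw [← List.countP_append, List.take_append_drop]
    have htake : (l.take (m+1)).countP (fun x => decide (x ≤ t)) = m + 1 := by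
      rw [List.countP_eq_length.mpr, List.length_take]
      · omega
      · intro x hx
        rw [List.mem_iff_getElem] at hx
        obtain ⟨i, hi, rfl⟩ := hx
        rw [List.getElem_take]
        simp only [List.length_take] at hi
        simp only [decide_eq_true_eq]
        exact le_trans (hrel i m (by omega) hm (by omega)) h
    omega
  · intro h
    by_contra hc
    push_neg at hc
    have hsplit : l.countP (fun x => decide (x ≤ t)) =
        (l.take m).countP (fun x => decide (x ≤ t)) +
        (l.drop m).countP (fun x => decide (x ≤ t)) := by
      rw [← List.countP_append, List.take_append_drop]
    have hdrop : (l.drop m).countP (fun x => decide (x ≤ t)) = 0 := by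
      rw [List.countP_eq_zero]
      intro x hx
      rw [List.mem_iff_getElem] at hx
      obtain ⟨i, hi, rfl⟩ := hx
      rw [List.getElem_drop]
      simp only [List.length_drop] at hi
      simp only [decide_eq_true_eq, not_le]
      exact lt_of_lt_of_le hc (hrel m (m+i) hm (by omega) (by omega))
    have htake := List.countP_le_length (l := l.take m) (p := fun x => decide (x ≤ t))
    rw [List.length_take] at htake
    omega

lemma getD_le_iff (A : Finset ℕ) {m : ℕ} (hm : m < A.card) (t : ℕ) :
    (A.sort (· ≤ ·)).getD m 0 ≤ t ↔ m < pcLe A t := by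
  rw [← countP_sort]
  exact sorted_getD_le_iff (Finset.pairwise_sort _ _) (by rwa [Finset.length_sort]) t

lemma galeLE_iff (B I : Finset ℕ) :
    galeLE B I ↔ B.card = I.card ∧ ∀ t, pcLe I t ≤ pcLe B t := by
  constructor
  · rintro ⟨hcard, h⟩
    refine ⟨hcard, fun t => ?_⟩
    by_cases hc : pcLe I t = 0
    · omega
    have hcI : pcLe I t ≤ I.card := Finset.card_filter_le _ _
    have h1 : pcLe I t - 1 < I.card := by omega
    have h2 : pcLe I t - 1 < B.card := by omega
    have hI : (I.sort (· ≤ ·)).getD (pcLe I t - 1) 0 ≤ t :=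
      (getD_le_iff I h1 t).mpr (by omega)
    have hB : (B.sort (· ≤ ·)).getD (pcLe I t - 1) 0 ≤ t :=
      le_trans (h _ h2) hI
    have := (getD_le_iff B h2 t).mp hB
    omega
  · rintro ⟨hcard, h⟩
    refine ⟨hcard, fun m hm => ?_⟩
    set t := (I.sort (· ≤ ·)).getD m 0 with ht
    have hmI : m < I.card := hcard ▸ hm
    have h1 : m < pcLe I t := (getD_le_iff I hmI t).mp (le_refl _)
    exact (getD_le_iff B hm t).mpr (lt_of_lt_of_le h1 (h t))

/-- greedy choice of a subset of `J` suffix-dominated by `I`. -/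
def greedyW : ℕ → Finset ℕ → Finset ℕ → Finset ℕ
  | 0, _, _ => ∅
  | (fuel+1), I, J =>
    if hI : I.Nonempty then
      if hJ : (J.filter (· ≤ I.max' hI)).Nonempty then
        insert ((J.filter (· ≤ I.max' hI)).max' hJ)
          (greedyW fuel (I.erase (I.max' hI)) (J.erase ((J.filter (· ≤ I.max' hI)).max' hJ)))
      else greedyW fuel (I.erase (I.max' hI)) J
    else ∅

lemma greedyW_subset (fuel : ℕ) (I J : Finset ℕ) : greedyW fuel I J ⊆ J := by
  induction fuel generalizing I J with
  | zero => simp [greedyW]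
  | succ fuel ih =>
    rw [greedyW]
    split_ifs with hI hJ
    · intro x hx
      rcases Finset.mem_insert.mp hx with rfl | hx
      · exact (Finset.mem_filter.mp ((J.filter (· ≤ I.max' hI)).max'_mem hJ)).1
      · exact Finset.erase_subset _ _ (ih _ _ hx)
    · exact ih _ _
    · exact Finset.empty_subset _

lemma greedyW_card (fuel : ℕ) (I J : Finset ℕ) : (greedyW fuel I J).card ≤ I.card := by
  induction fuel generalizing I J with
  | zero => simp [greedyW]
  | succ fuel ih =>
    rw [greedyW]
    split_ifs with hI hJ
    · have h1 := Finset.card_insert_le ((J.filter (· ≤ I.max' hI)).max' hJ)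
        (greedyW fuel (I.erase (I.max' hI)) (J.erase ((J.filter (· ≤ I.max' hI)).max' hJ)))
      have h2 := ih (I.erase (I.max' hI)) (J.erase ((J.filter (· ≤ I.max' hI)).max' hJ))
      have h3 : (I.erase (I.max' hI)).card = I.card - 1 :=
        Finset.card_erase_of_mem (I.max'_mem hI)
      have h4 : 0 < I.card := Finset.card_pos.mpr hI
      omega
    · have h2 := ih (I.erase (I.max' hI)) J
      have h3 : (I.erase (I.max' hI)).card = I.card - 1 :=
        Finset.card_erase_of_mem (I.max'_mem hI)
      omega
    · simp

lemma greedyW_sfx (fuel : ℕ) (I J : Finset ℕ) (t : ℕ) :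
    sfx (greedyW fuel I J) t ≤ sfx I t := by
  induction fuel generalizing I J with
  | zero => simp [greedyW, sfx]
  | succ fuel ih =>
    rw [greedyW]
    split_ifs with hI hJ
    · set s := I.max' hI
      set j := (J.filter (· ≤ s)).max' hJ with hj
      have hjs : j ≤ s := (Finset.mem_filter.mp ((J.filter (· ≤ s)).max'_mem hJ)).2
      set W' := greedyW fuel (I.erase s) (J.erase j) with hW'
      have hjW' : j ∉ W' := fun hc => (Finset.notMem_erase j J) (greedyW_subset _ _ _ hc)
      have h1 : sfx (insert j W') t = sfx W' t + (if t < j then 1 else 0) := by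
        have := sfx_erase (insert j W') (Finset.mem_insert_self j W') t
        rwa [Finset.erase_insert hjW'] at this
      have h2 : sfx W' t ≤ sfx (I.erase s) t := ih (I.erase s) (J.erase j)
      have h3 : sfx I t = sfx (I.erase s) t + (if t < s then 1 else 0) :=
        sfx_erase I (I.max'_mem hI) t
      by_cases ht : t < j
      · have : t < s := lt_of_lt_of_le ht hjs
        rw [h1, h3, if_pos ht, if_pos this]; omega
      · rw [h1, if_neg ht]
        refine le_trans h2 ?_
        rw [h3]; omega
    · have h2 := ih (I.erase (I.max' hI)) J
      have h3 : sfx I t = sfx (I.erase (I.max' hI)) t + (if t < I.max' hI then 1 else 0) :=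
        sfx_erase I (I.max'_mem hI) t
      refine le_trans h2 ?_
      omega
    · have : sfx (∅ : Finset ℕ) t = 0 := by simp [sfx]
      omega

lemma greedyW_bound (fuel : ℕ) (I J : Finset ℕ) (hcard : I.card ≤ fuel)
    (hJ0 : ∀ j ∈ J, 1 ≤ j) :
    ∃ t, pcLe J t + sfx I t ≤ (greedyW fuel I J).card := by
  induction fuel generalizing I J with
  | zero =>
    refine ⟨0, ?_⟩
    have hIe : I = ∅ := Finset.card_eq_zero.mp (by omega)
    have h1 : pcLe J 0 = 0 := by
      rw [pcLe, Finset.card_eq_zero, Finset.filter_eq_empty_iff]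
      intro x hx
      have := hJ0 x hx
      omega
    have h2 : sfx I 0 = 0 := by simp [hIe, sfx]
    omega
  | succ fuel ih =>
    rw [greedyW]
    split_ifs with hI hJf
    · set s := I.max' hI with hs
      set j := (J.filter (· ≤ s)).max' hJf with hj
      have hjmem : j ∈ J.filter (· ≤ s) := (J.filter (· ≤ s)).max'_mem hJf
      have hjJ : j ∈ J := (Finset.mem_filter.mp hjmem).1
      have hjs : j ≤ s := (Finset.mem_filter.mp hjmem).2
      set W' := greedyW fuel (I.erase s) (J.erase j) with hW'
      have hjW' : j ∉ W' := fun hc => (Finset.notMem_erase j J) (greedyW_subset _ _ _ hc)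
      have hcard' : (I.erase s).card ≤ fuel := by
        rw [hs, Finset.card_erase_of_mem (I.max'_mem hI)]
        have h4 : 0 < I.card := Finset.card_pos.mpr hI
        omega
      obtain ⟨t, hIH⟩ : ∃ t, pcLe (J.erase j) t + sfx (I.erase s) t ≤ W'.card :=
        ih (I.erase s) (J.erase j) hcard' (fun x hx => hJ0 x (Finset.erase_subset _ _ hx))
      have hcins : (insert j W').card = W'.card + 1 := Finset.card_insert_of_notMem hjW'
      by_cases hts : s ≤ t
      · refine ⟨t, ?_⟩
        have e1 : pcLe J t = pcLe (J.erase j) t + 1 := by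
          rw [pcLe_erase J hjJ t, if_pos (le_trans hjs hts)]
        have e2 : sfx I t = sfx (I.erase s) t := by
          rw [sfx_erase I (I.max'_mem hI) t, if_neg (by rw [← hs]; omega), ← hs]
          omega
        omega
      · by_cases htj : j ≤ t
        · refine ⟨s, ?_⟩
          have e1 : pcLe J s ≤ pcLe J j := by
            apply Finset.card_le_card
            intro x hx
            have hx' := Finset.mem_filter.mp hx
            exact Finset.mem_filter.mpr ⟨hx'.1, Finset.le_max' _ x (Finset.mem_filter.mpr hx')⟩
          have e2 : pcLe J j = pcLe (J.erase j) j + 1 := by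
            rw [pcLe_erase J hjJ j, if_pos (le_refl j)]
          have e3 : pcLe (J.erase j) j ≤ pcLe (J.erase j) t := pcLe_mono _ htj
          have e4 : sfx I s = sfx (I.erase s) s := by
            rw [sfx_erase I (I.max'_mem hI) s, if_neg (by rw [← hs]; omega), ← hs]
            omega
          have e5 : sfx (I.erase s) s ≤ sfx (I.erase s) t := sfx_anti _ (by omega)
          omega
        · refine ⟨t, ?_⟩
          have e1 : pcLe J t = pcLe (J.erase j) t := by
            rw [pcLe_erase J hjJ t, if_neg htj]
            omega
          have e2 : sfx I t = sfx (I.erase s) t + 1 := by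
            rw [sfx_erase I (I.max'_mem hI) t, if_pos (by omega)]
          omega
    · set s := I.max' hI with hs
      have hcard' : (I.erase s).card ≤ fuel := by
        rw [hs, Finset.card_erase_of_mem (I.max'_mem hI)]
        have h4 : 0 < I.card := Finset.card_pos.mpr hI
        omega
      obtain ⟨t, hIH⟩ := ih (I.erase s) J hcard' hJ0
      by_cases hts : s ≤ t
      · refine ⟨t, ?_⟩
        have e2 : sfx I t = sfx (I.erase s) t := by
          rw [sfx_erase I (I.max'_mem hI) t, if_neg (by rw [← hs]; omega), ← hs]
          omega
        omega
      · refine ⟨s, ?_⟩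
        have e1 : pcLe J s = 0 := by
          rw [pcLe, Finset.card_eq_zero]
          exact Finset.not_nonempty_iff_eq_empty.mp hJf
        have e4 : sfx I s = sfx (I.erase s) s := by
          rw [sfx_erase I (I.max'_mem hI) s, if_neg (by rw [← hs]; omega), ← hs]
          omega
        have e5 : sfx (I.erase s) s ≤ sfx (I.erase s) t := sfx_anti _ (by omega)
        omega
    · refine ⟨0, ?_⟩
      have hIe : I = ∅ := Finset.not_nonempty_iff_eq_empty.mp hI
      have h1 : pcLe J 0 = 0 := by
        rw [pcLe, Finset.card_eq_zero, Finset.filter_eq_empty_iff]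
        intro x hx
        have := hJ0 x hx
        omega
      have h2 : sfx I 0 = 0 := by simp [hIe, sfx]
      omega

lemma fill_aux (n : ℕ) (I : Finset ℕ) (hI : I ⊆ Finset.Icc 1 n) :
    ∀ k : ℕ, ∀ V : Finset ℕ, V ⊆ Finset.Icc 1 n → V.card + k = I.card →
      (∀ t, sfx V t ≤ sfx I t) →
      ∃ B : Finset ℕ, V ⊆ B ∧ B ⊆ Finset.Icc 1 n ∧ B.card = I.card ∧
        ∀ t, sfx B t ≤ sfx I t := by
  intro k
  induction k with
  | zero =>
    intro V hV hc hsfx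
    exact ⟨V, Finset.Subset.refl V, hV, by omega, hsfx⟩
  | succ k ih =>
    intro V hV hc hsfx
    have hVI : V.card < I.card := by omega
    have hIn : I.card ≤ n := by
      have := Finset.card_le_card hI
      simpa [Nat.card_Icc] using this
    have hC : (Finset.Icc 1 n \ V).Nonempty := by
      rw [← Finset.card_pos, Finset.card_sdiff_of_subset hV]
      have := Finset.card_le_card hV
      simp only [Nat.card_Icc] at *
      omega
    set x := (Finset.Icc 1 n \ V).min' hC with hx
    have hxmem := (Finset.Icc 1 n \ V).min'_mem hC
    have hxIcc : x ∈ Finset.Icc 1 n := (Finset.mem_sdiff.mp hxmem).1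
    have hxV : x ∉ V := (Finset.mem_sdiff.mp hxmem).2
    have hcard' : (insert x V).card + k = I.card := by
      rw [Finset.card_insert_of_notMem hxV]; omega
    have hsub' : insert x V ⊆ Finset.Icc 1 n :=
      Finset.insert_subset hxIcc hV
    have hsfx' : ∀ t, sfx (insert x V) t ≤ sfx I t := by
      intro t
      have hins : sfx (insert x V) t = sfx V t + (if t < x then 1 else 0) := by
        have := sfx_erase (insert x V) (Finset.mem_insert_self x V) t
        rwa [Finset.erase_insert hxV] at this
      by_cases htx : t < x
      · have hfull : Finset.Icc 1 t ⊆ V := by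
          intro y hy
          by_contra hyV
          have hyIcc : y ∈ Finset.Icc 1 n := by
            have hxn := Finset.mem_Icc.mp hxIcc
            have hyt := Finset.mem_Icc.mp hy
            exact Finset.mem_Icc.mpr ⟨hyt.1, by omega⟩
          have := (Finset.Icc 1 n \ V).min'_le y (Finset.mem_sdiff.mpr ⟨hyIcc, hyV⟩)
          rw [← hx] at this
          have := Finset.mem_Icc.mp hy
          omega
        have hpV : t ≤ pcLe V t := by
          have : Finset.Icc 1 t ⊆ V.filter (· ≤ t) := by
            intro y hy
            exact Finset.mem_filter.mpr ⟨hfull hy, (Finset.mem_Icc.mp hy).2⟩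
          have := Finset.card_le_card this
          simpa [Nat.card_Icc, pcLe] using this
        have hpI : pcLe I t ≤ t := by
          have : I.filter (· ≤ t) ⊆ Finset.Icc 1 t := by
            intro y hy
            have h1 := Finset.mem_filter.mp hy
            have h2 := Finset.mem_Icc.mp (hI h1.1)
            exact Finset.mem_Icc.mpr ⟨h2.1, h1.2⟩
          have := Finset.card_le_card this
          simpa [Nat.card_Icc, pcLe] using this
        have e1 := pcLe_add_sfx V t
        have e2 := pcLe_add_sfx I t
        rw [hins, if_pos htx]
        omega
      · rw [hins, if_neg htx]
        have := hsfx t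
        omega
    obtain ⟨B, hB1, hB2, hB3, hB4⟩ := ih (insert x V) hsub' hcard' hsfx'
    exact ⟨B, (Finset.subset_insert x V).trans hB1, hB2, hB3, hB4⟩

lemma range_ne (n : ℕ) : (Finset.range (n+1)).Nonempty := ⟨0, by simp⟩

lemma schubertRank_eq (n : ℕ) (I J : Finset ℕ) (hI : I ⊆ Finset.Icc 1 n)
    (hJ : J ⊆ Finset.Icc 1 n) :
    schubertRank n I J = (Finset.range (n+1)).inf' (range_ne n)
      (fun t => pcLe J t + sfx I t) := by
  classical
  apply le_antisymm
  · apply Finset.sup_le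
    intro B hB
    rw [Finset.mem_filter, Finset.mem_powerset] at hB
    obtain ⟨hBsub, hBg⟩ := hB
    obtain ⟨hcard, hpc⟩ := (galeLE_iff B I).mp hBg
    apply Finset.le_inf'
    intro t _
    have h1 : (J ∩ B).card ≤ pcLe J t + sfx B t := by
      have e1 : pcLe (J ∩ B) t + sfx (J ∩ B) t = (J ∩ B).card := pcLe_add_sfx _ _
      have e2 : pcLe (J ∩ B) t ≤ pcLe J t :=
        Finset.card_le_card (Finset.filter_subset_filter _ Finset.inter_subset_left)
      have e3 : sfx (J ∩ B) t ≤ sfx B t :=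
        Finset.card_le_card (Finset.filter_subset_filter _ Finset.inter_subset_right)
      omega
    have h2 : sfx B t ≤ sfx I t := by
      have e1 := pcLe_add_sfx B t
      have e2 := pcLe_add_sfx I t
      have e3 := hpc t
      omega
    omega
  · set V := greedyW I.card I J with hV
    have hVJ : V ⊆ J := greedyW_subset _ _ _
    have hVcard : V.card ≤ I.card := greedyW_card _ _ _
    have hVsfx : ∀ t, sfx V t ≤ sfx I t := greedyW_sfx _ _ _
    obtain ⟨t0, ht0⟩ := greedyW_bound I.card I J (le_refl _)
      (fun j hj => (Finset.mem_Icc.mp (hJ hj)).1)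
    have ht0' : pcLe J t0 + sfx I t0 ≤ V.card := ht0
    obtain ⟨B, hVB, hBsub, hBcard, hBsfx⟩ :=
      fill_aux n I hI (I.card - V.card) V (hVJ.trans hJ) (by omega) hVsfx
    have hBg : galeLE B I := by
      rw [galeLE_iff]
      refine ⟨hBcard, fun t => ?_⟩
      have e1 := pcLe_add_sfx B t
      have e2 := pcLe_add_sfx I t
      have e3 := hBsfx t
      omega
    have hmem : B ∈ (Finset.Icc 1 n).powerset.filter fun B => galeLE B I := by
      rw [Finset.mem_filter, Finset.mem_powerset]
      exact ⟨hBsub, hBg⟩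
    have hsup : (J ∩ B).card ≤ schubertRank n I J := by
      have := Finset.le_sup (f := fun B => (J ∩ B).card) hmem
      exact this
    have hVJB : V ⊆ J ∩ B := Finset.subset_inter hVJ hVB
    have hVle : V.card ≤ (J ∩ B).card := Finset.card_le_card hVJB
    have hmin : (Finset.range (n+1)).inf' (range_ne n) (fun t => pcLe J t + sfx I t)
        ≤ pcLe J t0 + sfx I t0 := by
      by_cases htn : t0 ≤ n
      · exact Finset.inf'_le _ (Finset.mem_range.mpr (by omega))
      · have h1 : (Finset.range (n+1)).inf' (range_ne n) (fun t => pcLe J t + sfx I t)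
            ≤ pcLe J n + sfx I n := Finset.inf'_le _ (Finset.mem_range.mpr (by omega))
        have h2 : pcLe J n ≤ pcLe J t0 := pcLe_mono _ (by omega)
        have h3 : sfx I n = 0 := by
          rw [sfx, Finset.card_eq_zero, Finset.filter_eq_empty_iff]
          intro x hx
          have := Finset.mem_Icc.mp (hI hx)
          omega
        omega
    omega

lemma sfx_union_disjoint {X Y : Finset ℕ} (h : Disjoint X Y) (t : ℕ) :
    sfx (X ∪ Y) t = sfx X t + sfx Y t := by
  classical
  rw [sfx, sfx, sfx, Finset.filter_union]
  exact Finset.card_union_of_disjoint (Finset.disjoint_filter_filter h)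

section padsec
variable {n : ℕ} {S : Finset ℕ} {s : ℕ}

lemma pad_inv (hS : S ⊆ Finset.Icc 1 n) (hs : s ∈ S) :
    ∀ k, k ≤ padDepth S s →
      S ⊆ pad S s k ∧ pad S s k ⊆ S ∪ Finset.Ico 1 s ∧
      ((Finset.Ico 1 s).filter (fun i => i ∉ pad S s k)).card + k = padDepth S s ∧
      (∀ x ∈ pad S s k, x ∉ S → ∀ y ∈ Finset.Ico 1 s, y ∉ pad S s k → y < x) := by
  classical
  have hs1 : 1 ≤ s ∧ s ≤ n := Finset.mem_Icc.mp (hS hs)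
  intro k
  induction k with
  | zero =>
    intro _
    refine ⟨Finset.Subset.refl S, Finset.subset_union_left, ?_, ?_⟩
    · have hpart : ((Finset.Ico 1 s).filter (fun i => i ∈ S)).card +
          ((Finset.Ico 1 s).filter (fun i => i ∉ S)).card = s - 1 := by
        have := Finset.card_filter_add_card_filter_not
          (s := Finset.Ico 1 s) (p := fun i => i ∈ S)
        simpa [Nat.card_Ico] using this
      have heq : (Finset.Ico 1 s).filter (fun i => i ∈ S) =
          (S.filter (fun i => i ≤ s)).erase s := by
        ext x
        simp only [Finset.mem_filter, Finset.mem_Ico, Finset.mem_erase]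
        constructor
        · rintro ⟨⟨h1, h2⟩, h3⟩
          exact ⟨by omega, h3, by omega⟩
        · rintro ⟨h1, h2, h3⟩
          have := Finset.mem_Icc.mp (hS h2)
          exact ⟨⟨by omega, by omega⟩, h2⟩
      have hsmem : s ∈ S.filter (fun i => i ≤ s) :=
        Finset.mem_filter.mpr ⟨hs, le_refl s⟩
      have hcerase := Finset.card_erase_of_mem hsmem
      have hpos : 0 < (S.filter (fun i => i ≤ s)).card := Finset.card_pos.mpr ⟨s, hsmem⟩
      have hle : (S.filter (fun i => i ≤ s)).card ≤ s := by
        have hsub : S.filter (fun i => i ≤ s) ⊆ Finset.Icc 1 s := by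
          intro x hx
          have h1 := Finset.mem_filter.mp hx
          have h2 := Finset.mem_Icc.mp (hS h1.1)
          exact Finset.mem_Icc.mpr ⟨h2.1, h1.2⟩
        have := Finset.card_le_card hsub
        simpa [Nat.card_Icc] using this
      rw [heq] at hpart
      rw [padDepth]
      simp only [pad]
      exact (show ((Finset.Ico 1 s).filter (fun i => i ∉ S)).card + 0 =
          s - (S.filter (fun i => i ≤ s)).card by omega)
    · intro x hx hxS
      exact absurd hx hxS
  | succ k ih =>
    intro hk1
    obtain ⟨ih1, ih2, ih3, ih4⟩ := ih (by omega)
    have hFk : ((Finset.Ico 1 s).filter (fun i => i ∉ pad S s k)).Nonempty := by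
      rw [← Finset.card_pos]
      omega
    set m := ((Finset.Ico 1 s).filter (fun i => i ∉ pad S s k)).max' hFk with hm
    have hmmem : m ∈ (Finset.Ico 1 s).filter (fun i => i ∉ pad S s k) :=
      Finset.max'_mem _ hFk
    have hmIco : m ∈ Finset.Ico 1 s := (Finset.mem_filter.mp hmmem).1
    have hmpad : m ∉ pad S s k := (Finset.mem_filter.mp hmmem).2
    have hpadeq : pad S s (k+1) = insert m (pad S s k) := by
      rw [pad, dif_pos hFk]
    refine ⟨?_, ?_, ?_, ?_⟩
    · rw [hpadeq]; exact ih1.trans (Finset.subset_insert m _)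
    · rw [hpadeq]
      exact Finset.insert_subset (Finset.mem_union_right _ hmIco) ih2
    · have heq : (Finset.Ico 1 s).filter (fun i => i ∉ pad S s (k+1)) =
          ((Finset.Ico 1 s).filter (fun i => i ∉ pad S s k)).erase m := by
        rw [hpadeq]
        ext x
        simp only [Finset.mem_filter, Finset.mem_erase, Finset.mem_insert, not_or]
        tauto
      rw [heq, Finset.card_erase_of_mem hmmem]
      omega
    · intro x hx hxS y hy hypad
      rw [hpadeq] at hx hypad
      have hynm : y ≠ m := fun hc => hypad (by rw [hc]; exact Finset.mem_insert_self m _)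
      have hynpad : y ∉ pad S s k := fun hc => hypad (Finset.mem_insert_of_mem hc)
      rcases Finset.mem_insert.mp hx with rfl | hx'
      · have := Finset.le_max' ((Finset.Ico 1 s).filter (fun i => i ∉ pad S s k)) y
          (Finset.mem_filter.mpr ⟨hy, hynpad⟩)
        rw [← hm] at this
        omega
      · exact ih4 x hx' hxS y hy hynpad

lemma pad_sfx (hS : S ⊆ Finset.Icc 1 n) (hs : s ∈ S) (k : ℕ) (hk : k ≤ padDepth S s) (t : ℕ) :
    sfx (pad S s k) t = sfx S t + min k (sfx ((Finset.Ico 1 s).filter (fun i => i ∉ S)) t) := by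
  classical
  obtain ⟨h1, h2, h3, h4⟩ := pad_inv hS hs k hk
  obtain ⟨g1, g2, g3, g4⟩ := pad_inv hS hs 0 (by omega)
  have hd0 : ((Finset.Ico 1 s).filter (fun i => i ∉ S)).card = padDepth S s := by
    have g3' : ((Finset.Ico 1 s).filter (fun i => i ∉ S)).card + 0 = padDepth S s := g3
    exact (Nat.add_zero _).symm.trans g3'
  set MM := (Finset.Ico 1 s).filter (fun i => i ∉ S) with hMM
  set Fk := (Finset.Ico 1 s).filter (fun i => i ∉ pad S s k) with hFk
  have hFkMM : Fk ⊆ MM := by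
    intro x hx
    have hx' := Finset.mem_filter.mp hx
    exact Finset.mem_filter.mpr ⟨hx'.1, fun hc => hx'.2 (h1 hc)⟩
  have hdiff : pad S s k \ S = MM \ Fk := by
    ext x
    simp only [Finset.mem_sdiff, hMM, hFk, Finset.mem_filter, not_and, not_not]
    constructor
    · rintro ⟨hx1, hx2⟩
      have hico : x ∈ Finset.Ico 1 s := by
        rcases Finset.mem_union.mp (h2 hx1) with h | h
        · exact absurd h hx2
        · exact h
      exact ⟨⟨hico, hx2⟩, fun _ => hx1⟩
    · rintro ⟨⟨hx1, hx2⟩, hx3⟩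
      exact ⟨hx3 hx1, hx2⟩
  have hsplit : sfx (pad S s k) t = sfx S t + sfx (MM \ Fk) t := by
    rw [← hdiff, ← sfx_union_disjoint (Finset.disjoint_sdiff) t,
      Finset.union_sdiff_of_subset h1]
  have hcardMF : (MM \ Fk).card = k := by
    rw [Finset.card_sdiff_of_subset hFkMM]
    omega
  have hparts : sfx MM t = sfx (MM \ Fk) t + sfx Fk t := by
    rw [← sfx_union_disjoint (Finset.sdiff_disjoint) t, Finset.sdiff_union_of_subset hFkMM]
  have hMFle : sfx (MM \ Fk) t ≤ k := by
    rw [← hcardMF]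
    exact Finset.card_filter_le _ _
  by_cases hf : sfx Fk t = 0
  · omega
  · have : (Fk.filter (fun i => t < i)).Nonempty := by
      rw [← Finset.card_pos]
      have : sfx Fk t = (Fk.filter (fun i => t < i)).card := rfl
      omega
    obtain ⟨y, hy⟩ := this
    have hy' := Finset.mem_filter.mp hy
    have hyIco : y ∈ Finset.Ico 1 s := (Finset.mem_filter.mp hy'.1).1
    have hynpad : y ∉ pad S s k := (Finset.mem_filter.mp hy'.1).2
    have hall : (MM \ Fk).filter (fun i => t < i) = MM \ Fk := by
      apply Finset.filter_true_of_mem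
      intro x hx
      have hx' : x ∈ pad S s k \ S := hdiff ▸ hx
      have hx'' := Finset.mem_sdiff.mp hx'
      have := h4 x hx''.1 hx''.2 y hyIco hynpad
      omega
    have : sfx (MM \ Fk) t = k := by
      rw [sfx, hall, hcardMF]
    omega
end padsec

lemma inf'_min {α : Type*} (s : Finset α) (h : s.Nonempty) (f g : α → ℕ) :
    s.inf' h (fun t => min (f t) (g t)) = min (s.inf' h f) (s.inf' h g) := by
  apply le_antisymm
  · obtain ⟨a, ha, hfa⟩ := Finset.exists_mem_eq_inf' h f
    obtain ⟨b, hb, hgb⟩ := Finset.exists_mem_eq_inf' h g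
    apply le_min
    · exact le_trans (Finset.inf'_le _ ha) (by rw [hfa]; exact min_le_left _ _)
    · exact le_trans (Finset.inf'_le _ hb) (by rw [hgb]; exact min_le_right _ _)
  · apply Finset.le_inf'
    intro b hb
    exact min_le_min (Finset.inf'_le _ hb) (Finset.inf'_le _ hb)

lemma inf'_add_const {α : Type*} (s : Finset α) (h : s.Nonempty) (f : α → ℕ) (c : ℕ) :
    s.inf' h (fun t => f t + c) = s.inf' h f + c := by
  apply le_antisymm
  · obtain ⟨a, ha, hfa⟩ := Finset.exists_mem_eq_inf' h f
    exact le_trans (Finset.inf'_le _ ha) (by omega)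
  · apply Finset.le_inf'
    intro b hb
    have : s.inf' h f ≤ f b := Finset.inf'_le f hb
    omega

lemma pcLe_quad {J' J : Finset ℕ} (hJ : J' ⊆ J) {u t : ℕ} (hut : u ≤ t) :
    pcLe J u + pcLe J' t ≤ pcLe J t + pcLe J' u := by
  classical
  have key : ∀ X : Finset ℕ,
      pcLe X t = pcLe X u + ((X.filter (· ≤ t)).filter (fun x => ¬ x ≤ u)).card := by
    intro X
    have h1 : (X.filter (· ≤ t)).filter (fun x => x ≤ u) = X.filter (· ≤ u) := by
      ext x
      simp only [Finset.mem_filter]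
      constructor
      · rintro ⟨⟨h1, h2⟩, h3⟩; exact ⟨h1, h3⟩
      · rintro ⟨h1, h2⟩; exact ⟨⟨h1, by omega⟩, h2⟩
    have := Finset.card_filter_add_card_filter_not
      (s := X.filter (· ≤ t)) (p := fun x => x ≤ u)
    rw [h1] at this
    rw [pcLe, pcLe, ← this]
  have hmono : ((J'.filter (· ≤ t)).filter (fun x => ¬ x ≤ u)).card ≤
      ((J.filter (· ≤ t)).filter (fun x => ¬ x ≤ u)).card :=
    Finset.card_le_card (Finset.filter_subset_filter _ (Finset.filter_subset_filter _ hJ))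
  have k1 := key J
  have k2 := key J'
  omega

end SchubertAux


theorem stmt_10 (n : ℕ) (S : Finset ℕ) (hS : S ⊆ Finset.Icc 1 n) (hS0 : S.Nonempty)
    (s : ℕ) (hs : s ∈ S) :
    (∀ k ≤ padDepth S s, ∀ I ⊆ Finset.Icc 1 n,
      schubertRank n (pad S s k) I =
        min (schubertRank n (pad S s (padDepth S s)) I) (schubertRank n S I + k)) ∧
    ∀ J' J : Finset ℕ, J' ⊆ J → J ⊆ Finset.Icc 1 n →
      (schubertRank n S J : ℤ) - (schubertRank n S J' : ℤ) ≤
        (schubertRank n (pad S s (padDepth S s)) J : ℤ) -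
          (schubertRank n (pad S s (padDepth S s)) J' : ℤ) := by
  classical
  have hs1 : 1 ≤ s ∧ s ≤ n := Finset.mem_Icc.mp (hS hs)
  set d := padDepth S s with hd
  set MM := (Finset.Ico 1 s).filter (fun i => i ∉ S) with hMM
  have hdcard : MM.card = d := by
    obtain ⟨g1, g2, g3, g4⟩ := pad_inv hS hs 0 (by omega)
    have g3' : ((Finset.Ico 1 s).filter (fun i => i ∉ S)).card + 0 = padDepth S s := g3
    exact (Nat.add_zero _).symm.trans g3'
  have hμle : ∀ t, sfx MM t ≤ d := by
    intro t
    have : sfx MM t ≤ MM.card := Finset.card_filter_le _ _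
    omega
  have hpadsub : ∀ k, k ≤ d → pad S s k ⊆ Finset.Icc 1 n := by
    intro k hk
    obtain ⟨h1, h2, h3, h4⟩ := pad_inv hS hs k hk
    refine h2.trans ?_
    intro x hx
    rcases Finset.mem_union.mp hx with h | h
    · exact hS h
    · have := Finset.mem_Ico.mp h
      exact Finset.mem_Icc.mpr ⟨this.1, by omega⟩
  have hpadd : ∀ (I : Finset ℕ), I ⊆ Finset.Icc 1 n → ∀ k, k ≤ d →
      schubertRank n (pad S s k) I = (Finset.range (n+1)).inf' (range_ne n)
        (fun t => pcLe I t + sfx S t + min k (sfx MM t)) := by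
    intro I hI k hk
    rw [schubertRank_eq n (pad S s k) I (hpadsub k hk) hI]
    refine Finset.inf'_congr (range_ne n) rfl (fun t _ => ?_)
    rw [pad_sfx hS hs k hk t, ← hMM]
    omega
  have hnorm : ∀ (I : Finset ℕ),
      (Finset.range (n+1)).inf' (range_ne n)
        (fun t => pcLe I t + sfx S t + min d (sfx MM t)) =
      (Finset.range (n+1)).inf' (range_ne n)
        (fun t => pcLe I t + sfx S t + sfx MM t) := by
    intro I
    refine Finset.inf'_congr (range_ne n) rfl (fun t _ => ?_)
    have := hμle t
    omega
  constructor
  · intro k hk I hI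
    rw [hpadd I hI k hk, hpadd I hI d (le_refl d), hnorm I,
      schubertRank_eq n S I hS hI]
    have e5 : (Finset.range (n+1)).inf' (range_ne n)
        (fun t => pcLe I t + sfx S t + min k (sfx MM t)) =
        (Finset.range (n+1)).inf' (range_ne n)
        (fun t => min (pcLe I t + sfx S t + sfx MM t) (pcLe I t + sfx S t + k)) := by
      refine Finset.inf'_congr (range_ne n) rfl (fun t _ => ?_)
      have := hμle t
      omega
    rw [e5, inf'_min, inf'_add_const _ _ (fun t => pcLe I t + sfx S t) k]
  · intro J' J hJJ hJn
    have hJ'n : J' ⊆ Finset.Icc 1 n := hJJ.trans hJn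
    rw [hpadd J hJn d (le_refl d), hnorm J, hpadd J' hJ'n d (le_refl d), hnorm J',
      schubertRank_eq n S J hS hJn, schubertRank_eq n S J' hS hJ'n]
    obtain ⟨t, htmem, htval⟩ := Finset.exists_mem_eq_inf' (range_ne n)
      (fun t => pcLe J t + sfx S t + sfx MM t)
    obtain ⟨u, humem, huval⟩ := Finset.exists_mem_eq_inf' (range_ne n)
      (fun t => pcLe J' t + sfx S t)
    rcases le_total u t with hut | htu
    · have hA : (Finset.range (n+1)).inf' (range_ne n) (fun t => pcLe J t + sfx S t)
          ≤ pcLe J u + sfx S u := Finset.inf'_le _ humem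
      have hB : (Finset.range (n+1)).inf' (range_ne n)
          (fun t => pcLe J' t + sfx S t + sfx MM t)
          ≤ pcLe J' t + sfx S t + sfx MM t := Finset.inf'_le _ htmem
      have hq := pcLe_quad hJJ hut
      omega
    · have hA : (Finset.range (n+1)).inf' (range_ne n) (fun t => pcLe J t + sfx S t)
          ≤ pcLe J t + sfx S t := Finset.inf'_le _ htmem
      have hB : (Finset.range (n+1)).inf' (range_ne n)
          (fun t => pcLe J' t + sfx S t + sfx MM t)
          ≤ pcLe J' u + sfx S u + sfx MM u := Finset.inf'_le _ humem
      have hμ : sfx MM u ≤ sfx MM t := sfx_anti _ htu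
      omega
end

section
/- Let w ∈ S_n be a vexillary permutation and let (i_1, j_1), (i_2, j_2) ∈ D(w) be two linked squares with j_1 < j_2. Then: (1) i_1 ≤ i_2; and (2) if (i_1 − 1, j_1) ∉ D(w) and (i_2 − 1, j_2) ∉ D(w), then the j_1-th and j_2-th columns of D(w) agree above the (i_1 − 1)-th row, i.e., for every i ≤ i_1 − 1 one has (i, j_1) ∈ D(w) if and only if (i, j_2) ∈ D(w), and for such i in D(w), r_{D(w)}(i, j_1) = r_{D(w)}(i, j_2). -/
open MvPolynomial

lemma my_mem_rothe {n : ℕ} {w : Equiv.Perm (Fin n)} {i j : ℕ} :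
    (i, j) ∈ RotheDiagram n w ↔
      ∃ a b : Fin n, (a:ℕ)+1 = i ∧ (b:ℕ)+1 = j ∧ a < w.symm b ∧ b < w a := by
  simp only [RotheDiagram, Finset.mem_image, Finset.mem_filter, Finset.mem_univ, true_and,
    Prod.ext_iff, Prod.exists]
  constructor
  · rintro ⟨a, b, ⟨h1, h2⟩, h3, h4⟩; exact ⟨a, b, h3, h4, h1, h2⟩
  · rintro ⟨a, b, h3, h4, h1, h2⟩; exact ⟨a, b, ⟨h1, h2⟩, h3, h4⟩

lemma my_card_lt {n : ℕ} (a : Fin n) :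
    (Finset.univ.filter fun k : Fin n => (k:ℕ) < (a:ℕ)).card = a := by
  have : (Finset.univ.filter fun k : Fin n => (k:ℕ) < (a:ℕ)) = Finset.Iio a := by
    ext k; simp only [Finset.mem_filter, Finset.mem_univ, true_and, Finset.mem_Iio, Fin.lt_def]
  rw [this, Fin.card_Iio]

/-- Split `{k < a}` into `{k < a, w k < b}` and `{k < a, b < w k}`, given `a < w⁻¹ b`. -/
lemma my_split {n : ℕ} (w : Equiv.Perm (Fin n)) (a b : Fin n) (h : (a:ℕ) < (w.symm b : ℕ)) :
    (a:ℕ) = (Finset.univ.filter fun k : Fin n => (k:ℕ) < (a:ℕ) ∧ (w k:ℕ) < (b:ℕ)).card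
        + (Finset.univ.filter fun k : Fin n => (k:ℕ) < (a:ℕ) ∧ (b:ℕ) < (w k:ℕ)).card := by
  have key := Finset.card_filter_add_card_filter_not
    (s := Finset.univ.filter fun k : Fin n => (k:ℕ) < (a:ℕ))
    (p := fun k : Fin n => (w k:ℕ) < (b:ℕ))
  rw [Finset.filter_filter, Finset.filter_filter, my_card_lt] at key
  have e2 : (Finset.univ.filter fun k : Fin n => (k:ℕ) < (a:ℕ) ∧ ¬ (w k:ℕ) < (b:ℕ))
      = (Finset.univ.filter fun k : Fin n => (k:ℕ) < (a:ℕ) ∧ (b:ℕ) < (w k:ℕ)) := by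
    ext k
    simp only [Finset.mem_filter, Finset.mem_univ, true_and]
    constructor
    · rintro ⟨hk, hk2⟩
      refine ⟨hk, lt_of_le_of_ne (by omega) fun hbe => ?_⟩
      have hwb : w k = b := Fin.ext hbe.symm
      have : k = w.symm b := by rw [← hwb, Equiv.symm_apply_apply]
      omega
    · rintro ⟨hk, hk2⟩; exact ⟨hk, by omega⟩
  rw [e2] at key
  omega

theorem stmt_12 (n : ℕ) (w : Equiv.Perm (Fin n)) (hw : Vexillary w)
    (i1 j1 i2 j2 : ℕ) (h1 : (i1, j1) ∈ RotheDiagram n w) (h2 : (i2, j2) ∈ RotheDiagram n w)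
    (hlink : RLinked n w (i1, j1) (i2, j2)) (hj : j1 < j2) :
    i1 ≤ i2 ∧
      ((i1 - 1, j1) ∉ RotheDiagram n w → (i2 - 1, j2) ∉ RotheDiagram n w →
        ∀ i ≤ i1 - 1,
          ((i, j1) ∈ RotheDiagram n w ↔ (i, j2) ∈ RotheDiagram n w) ∧
          ((i, j1) ∈ RotheDiagram n w →
            RotheRank n w (i, j1) = RotheRank n w (i, j2))) := by
  obtain ⟨a1, b1, hi1, hj1, ha1, hb1⟩ := my_mem_rothe.1 h1
  obtain ⟨a2, b2, hi2, hj2, ha2, hb2⟩ := my_mem_rothe.1 h2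
  subst hi1 hj1 hi2 hj2
  rw [Fin.lt_def] at ha1 hb1 ha2 hb2
  have hb : (b1:ℕ) < (b2:ℕ) := by omega
  -- the "live above" counts
  set T1 := Finset.univ.filter fun k : Fin n => (k:ℕ) < (a1:ℕ) ∧ (b1:ℕ) < (w k:ℕ) with hT1
  set T2 := Finset.univ.filter fun k : Fin n => (k:ℕ) < (a2:ℕ) ∧ (b2:ℕ) < (w k:ℕ) with hT2
  have s1 := my_split w a1 b1 ha1
  have s2 := my_split w a2 b2 ha2
  -- linked: T1.card = T2.card
  have htt : T1.card = T2.card := by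
    have hr1 : RotheRank n w ((a1:ℕ)+1, (b1:ℕ)+1)
        = ((Finset.univ.filter fun k : Fin n => (k:ℕ) < (a1:ℕ) ∧ (w k:ℕ) < (b1:ℕ)).card : ℤ) := by
      unfold RotheRank
      congr 2
      ext k
      simp only [Finset.mem_filter, Finset.mem_univ, true_and]
      omega
    have hr2 : RotheRank n w ((a2:ℕ)+1, (b2:ℕ)+1)
        = ((Finset.univ.filter fun k : Fin n => (k:ℕ) < (a2:ℕ) ∧ (w k:ℕ) < (b2:ℕ)).card : ℤ) := by
      unfold RotheRank
      congr 2
      ext k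
      simp only [Finset.mem_filter, Finset.mem_univ, true_and]
      omega
    unfold RLinked at hlink
    rw [hr1, hr2] at hlink
    simp only [hT1, hT2]
    omega
  -- Part 1 : a1 ≤ a2
  have hle : (a1:ℕ) ≤ (a2:ℕ) := by
    by_contra hcon
    push_neg at hcon
    have hsub : insert a2 T2 ⊆ T1 := by
      intro k hk
      rcases Finset.mem_insert.1 hk with rfl | hk
      · simp only [hT1, Finset.mem_filter, Finset.mem_univ, true_and]
        omega
      · simp only [hT2, Finset.mem_filter, Finset.mem_univ, true_and] at hk
        simp only [hT1, Finset.mem_filter, Finset.mem_univ, true_and]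
        omega
    have hnm : a2 ∉ T2 := by
      simp only [hT2, Finset.mem_filter, Finset.mem_univ, true_and]
      omega
    have := Finset.card_le_card hsub
    rw [Finset.card_insert_of_notMem hnm] at this
    omega
  refine ⟨by omega, ?_⟩
  intro h3 h4 i hi
  simp only [Nat.add_sub_cancel] at h3 h4 hi
  -- Key claim (★): no m < a1 has b1 < w m ≤ b2
  have star : ∀ m : Fin n, (m:ℕ) < (a1:ℕ) → (b1:ℕ) < (w m:ℕ) → (b2:ℕ) < (w m:ℕ) := by
    intro m0 hm0 hmb1
    by_contra hmb2
    push_neg at hmb2  -- (w m0 : ℕ) ≤ b2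
    -- w m0 ≠ b2
    have hne : (w m0 : ℕ) ≠ (b2:ℕ) := by
      intro he
      have hwb : w m0 = b2 := Fin.ext he
      have : m0 = w.symm b2 := by rw [← hwb, Equiv.symm_apply_apply]
      omega
    have ha1pos : 1 ≤ (a1:ℕ) := by omega
    -- position p = a1 - 1 has value ≤ b1
    have hpn : (a1:ℕ) - 1 < n := by omega
    set p : Fin n := ⟨(a1:ℕ) - 1, hpn⟩ with hp
    have hwp : (w p : ℕ) ≤ (b1:ℕ) := by
      by_contra hwp
      push_neg at hwp
      exact h3 (my_mem_rothe.2 ⟨p, b1, by simp [hp]; omega, rfl,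
        by rw [Fin.lt_def]; simp [hp]; omega, by rw [Fin.lt_def]; omega⟩)
    -- counting: find k3 with a1 ≤ k3 < a2 and b2 < w k3
    set S := Finset.univ.filter fun k : Fin n => (k:ℕ) < (a1:ℕ) ∧ (b2:ℕ) < (w k:ℕ) with hS
    have hsub2 : insert m0 S ⊆ T1 := by
      intro k hk
      rcases Finset.mem_insert.1 hk with rfl | hk
      · simp only [hT1, Finset.mem_filter, Finset.mem_univ, true_and]; omega
      · simp only [hS, Finset.mem_filter, Finset.mem_univ, true_and] at hk
        simp only [hT1, Finset.mem_filter, Finset.mem_univ, true_and]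
        omega
    have hm0S : m0 ∉ S := by
      simp only [hS, Finset.mem_filter, Finset.mem_univ, true_and]; omega
    have hc1 : S.card + 1 ≤ T1.card := by
      have := Finset.card_le_card hsub2
      rwa [Finset.card_insert_of_notMem hm0S] at this
    have hnsub : ¬ T2 ⊆ S := by
      intro hss
      have := Finset.card_le_card hss
      omega
    obtain ⟨k3, hk3T, hk3S⟩ := Finset.not_subset.1 hnsub
    simp only [hT2, Finset.mem_filter, Finset.mem_univ, true_and] at hk3T
    simp only [hS, Finset.mem_filter, Finset.mem_univ, true_and] at hk3S
    have hk3a : (a1:ℕ) ≤ (k3:ℕ) := by omega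
    -- 2143 pattern: (m0, p, k3, w.symm b2)
    apply hw
    refine ⟨m0, p, k3, w.symm b2, ?_, ?_, ?_, ?_, ?_, ?_⟩
    · rw [Fin.lt_def]
      simp only [hp]
      -- m0 < a1 - 1 since m0 ≠ p (w m0 > b1 ≥ w p)
      have : (m0:ℕ) ≠ (a1:ℕ) - 1 := by
        intro he
        have : m0 = p := Fin.ext (by simp [hp, he])
        rw [this] at hmb1
        omega
      omega
    · rw [Fin.lt_def]; simp only [hp]; omega
    · rw [Fin.lt_def]; omega
    · rw [Fin.lt_def]; omega
    · rw [Fin.lt_def, Equiv.apply_symm_apply]; omega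
    · rw [Fin.lt_def, Equiv.apply_symm_apply]; omega
  -- now conclude for each i ≤ a1
  match i, hi with
  | 0, _ =>
    constructor
    · constructor <;> intro hm <;> obtain ⟨a, b, ha, _, _, _⟩ := my_mem_rothe.1 hm <;> omega
    · intro hm
      obtain ⟨a, b, ha, _, _, _⟩ := my_mem_rothe.1 hm
      omega
  | (c+1), hi =>
    have hca : c < (a1:ℕ) := by omega
    have hcn : c < n := by omega
    set fc : Fin n := ⟨c, hcn⟩ with hfc
    have hmem1 : ((c+1 : ℕ), (b1:ℕ)+1) ∈ RotheDiagram n w ↔ (b1:ℕ) < (w fc:ℕ) := by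
      rw [my_mem_rothe]
      constructor
      · rintro ⟨a, b, ha, hbb, _, h4'⟩
        have : a = fc := Fin.ext (by simp [hfc]; omega)
        have hb' : b = b1 := Fin.ext (by omega)
        subst this; subst hb'
        rw [Fin.lt_def] at h4'; exact h4'
      · intro hlt
        exact ⟨fc, b1, by simp [hfc], rfl,
          by rw [Fin.lt_def]; simp only [hfc]; omega, by rw [Fin.lt_def]; exact hlt⟩
    have hmem2 : ((c+1 : ℕ), (b2:ℕ)+1) ∈ RotheDiagram n w ↔ (b2:ℕ) < (w fc:ℕ) := by
      rw [my_mem_rothe]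
      constructor
      · rintro ⟨a, b, ha, hbb, _, h4'⟩
        have : a = fc := Fin.ext (by simp [hfc]; omega)
        have hb' : b = b2 := Fin.ext (by omega)
        subst this; subst hb'
        rw [Fin.lt_def] at h4'; exact h4'
      · intro hlt
        exact ⟨fc, b2, by simp [hfc], rfl,
          by rw [Fin.lt_def]; simp only [hfc]; omega, by rw [Fin.lt_def]; exact hlt⟩
    constructor
    · rw [hmem1, hmem2]
      constructor
      · intro h; exact star fc (by simp [hfc]; omega) h
      · intro h; omega
    · intro _
      unfold RotheRank
      congr 2
      ext k
      simp only [Finset.mem_filter, Finset.mem_univ, true_and]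
      constructor
      · rintro ⟨hk, hk2⟩; exact ⟨hk, by omega⟩
      · rintro ⟨hk, hk2⟩
        refine ⟨hk, ?_⟩
        by_contra hge
        push_neg at hge
        -- w k ≠ b1
        have hne : (w k:ℕ) ≠ (b1:ℕ) := by
          intro he
          have hwb : w k = b1 := Fin.ext he
          have : k = w.symm b1 := by rw [← hwb, Equiv.symm_apply_apply]
          omega
        have := star k (by omega) (by omega)
        omega
end

section
/- Let w ∈ S_n be a vexillary permutation and let (i_1, j_1), (i_2, j_2) ∈ D(w) be two linked squares with i_1 < i_2. Then for every i' > i_2, (i', j_2) ∈ D(w) implies (i', j_1) ∈ D(w). -/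
open MvPolynomial

theorem stmt_13 (n : ℕ) (w : Equiv.Perm (Fin n)) (hw : Vexillary w)
    (i1 j1 i2 j2 : ℕ) (h1 : (i1, j1) ∈ RotheDiagram n w) (h2 : (i2, j2) ∈ RotheDiagram n w)
    (hlink : RLinked n w (i1, j1) (i2, j2)) (hi : i1 < i2) :
    ∀ i' > i2, (i', j2) ∈ RotheDiagram n w → (i', j1) ∈ RotheDiagram n w := by
  intro i' hi' h'
  obtain ⟨⟨a1, b1⟩, hm1, heq1⟩ := Finset.mem_image.mp h1
  obtain ⟨⟨a2, b2⟩, hm2, heq2⟩ := Finset.mem_image.mp h2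
  obtain ⟨⟨a3, b3⟩, hm3, heq3⟩ := Finset.mem_image.mp h'
  dsimp only at hm1 hm2 hm3 heq1 heq2 heq3
  simp only [Finset.mem_filter, Finset.mem_univ, true_and] at hm1 hm2 hm3
  obtain ⟨ha1, hb1⟩ := hm1
  obtain ⟨ha2, hb2⟩ := hm2
  obtain ⟨ha3, hb3⟩ := hm3
  rw [Prod.mk.injEq] at heq1 heq2 heq3
  obtain ⟨hi1, hj1⟩ := heq1
  obtain ⟨hi2, hj2⟩ := heq2
  obtain ⟨hi3, hj3⟩ := heq3
  subst hi1 hj1 hi2 hj2 hi3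
  have hb32 : b2 = b3 := Fin.ext (by omega)
  subst hb32
  -- basic numeric facts
  have ha12 : (a1 : ℕ) < (a2 : ℕ) := by omega
  have ha23 : (a2 : ℕ) < (a3 : ℕ) := by omega
  -- rewrite the rank condition
  have hR : ∀ a b : Fin n, RotheRank n w ((a : ℕ) + 1, (b : ℕ) + 1)
      = ((Finset.univ.filter fun k : Fin n =>
          (k : ℕ) < (a : ℕ) ∧ (w k : ℕ) < (b : ℕ)).card : ℤ) := by
    intro a b
    unfold RotheRank
    norm_num
  unfold RLinked at hlink
  rw [hR, hR] at hlink
  set c1 := (Finset.univ.filter fun k : Fin n =>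
      (k : ℕ) < (a1 : ℕ) ∧ (w k : ℕ) < (b1 : ℕ)).card with hc1
  set c2 := (Finset.univ.filter fun k : Fin n =>
      (k : ℕ) < (a2 : ℕ) ∧ (w k : ℕ) < (b2 : ℕ)).card with hc2
  have hc : c2 + (a1 : ℕ) = c1 + (a2 : ℕ) := by
    simp only at hlink
    omega
  -- split c2 into B and C
  set SB := Finset.univ.filter fun k : Fin n =>
      (k : ℕ) < (a1 : ℕ) ∧ (w k : ℕ) < (b2 : ℕ) with hSB
  set SC := Finset.univ.filter fun k : Fin n =>
      (a1 : ℕ) ≤ (k : ℕ) ∧ (k : ℕ) < (a2 : ℕ) ∧ (w k : ℕ) < (b2 : ℕ) with hSC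
  have hsplit : c2 = SB.card + SC.card := by
    rw [hc2, ← Finset.card_filter_add_card_filter_not
      (p := fun k : Fin n => (k : ℕ) < (a1 : ℕ))]
    congr 1
    · apply congrArg Finset.card
      rw [Finset.filter_filter, hSB]
      apply Finset.filter_congr
      intro k _
      constructor
      · rintro ⟨⟨_, h2⟩, h1⟩; exact ⟨h1, h2⟩
      · rintro ⟨h1, h2⟩; exact ⟨⟨by omega, h2⟩, h1⟩
    · apply congrArg Finset.card
      rw [Finset.filter_filter, hSC]
      apply Finset.filter_congr
      intro k _
      constructor
      · rintro ⟨⟨ha, h2⟩, h1⟩; exact ⟨by omega, ha, h2⟩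
      · rintro ⟨h0, h1, h2⟩; exact ⟨⟨h1, h2⟩, by omega⟩
  have hCle : SC.card ≤ (a2 : ℕ) - (a1 : ℕ) := by
    have : SC.card ≤ (Finset.Ico (a1 : ℕ) (a2 : ℕ)).card := by
      apply Finset.card_le_card_of_injOn (fun k : Fin n => (k : ℕ))
      · intro k hk
        rw [Finset.mem_coe, Finset.mem_filter] at hk
        rw [Finset.mem_coe, Finset.mem_Ico]
        exact ⟨hk.2.1, hk.2.2.1⟩
      · exact fun x _ y _ h => Fin.ext h
    simpa [Nat.card_Ico] using this
  -- key : find k0 with k0 ≤ a1, b1 < w k0 < b2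
  have hkey : ∃ k0 : Fin n, (k0 : ℕ) ≤ (a1 : ℕ) ∧ (b1 : ℕ) < (w k0 : ℕ)
      ∧ (w k0 : ℕ) < (b2 : ℕ) := by
    by_cases hB : c1 < SB.card
    · -- there is a square in SB not in the c1 set
      have hne : (SB \ (Finset.univ.filter fun k : Fin n =>
          (k : ℕ) < (a1 : ℕ) ∧ (w k : ℕ) < (b1 : ℕ))).Nonempty := by
        rw [Finset.sdiff_nonempty]
        intro hsub
        exact absurd (Finset.card_le_card hsub) (by omega)
      obtain ⟨k0, hk0⟩ := hne
      rw [Finset.mem_sdiff, hSB, Finset.mem_filter, Finset.mem_filter] at hk0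
      refine ⟨k0, le_of_lt hk0.1.2.1, ?_, hk0.1.2.2⟩
      have hge : (b1 : ℕ) ≤ (w k0 : ℕ) := by
        have := hk0.2
        simp only [Finset.mem_univ, true_and] at this
        omega
      rcases lt_or_eq_of_le hge with h | h
      · exact h
      · exfalso
        have : w k0 = b1 := Fin.ext h.symm
        have hk0p : k0 = w.symm b1 := by
          rw [← this, Equiv.symm_apply_apply]
        have : (a1 : ℕ) < (k0 : ℕ) := by
          rw [hk0p]; exact ha1
        omega
    · -- all of SC is full : in particular a1 is there
      have hCeq : SC.card = (a2 : ℕ) - (a1 : ℕ) := by omega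
      refine ⟨a1, le_refl _, ?_, ?_⟩
      · exact hb1
      · by_contra hcon
        push_neg at hcon
        have hss : SC.card ≤ (Finset.Ico ((a1 : ℕ) + 1) (a2 : ℕ)).card := by
          apply Finset.card_le_card_of_injOn (fun k : Fin n => (k : ℕ))
          · intro k hk
            rw [Finset.mem_coe, Finset.mem_filter] at hk
            simp only [Finset.mem_coe, Finset.mem_Ico]
            have hka1 : (k : ℕ) ≠ (a1 : ℕ) := by
              intro hkk
              have : k = a1 := Fin.ext hkk
              subst this
              omega
            exact ⟨by omega, hk.2.2.1⟩
          · exact fun x _ y _ h => Fin.ext h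
        rw [Nat.card_Ico] at hss
        omega
  obtain ⟨k0, hk0a, hk0b, hk0c⟩ := hkey
  -- the conclusion
  have hwa3 : (b2 : ℕ) < (w a3 : ℕ) := hb3
  have hb1a3 : b1 < w a3 := by
    rw [Fin.lt_def]; omega
  have ha3p : a3 < w.symm b1 := by
    by_contra hnp
    push_neg at hnp
    have hwp : w (w.symm b1) = b1 := Equiv.apply_symm_apply w b1
    have hpne : w.symm b1 ≠ a3 := by
      intro hh
      rw [hh] at hwp
      rw [hwp] at hwa3
      omega
    have hplt : ((w.symm b1 : Fin n) : ℕ) < (a3 : ℕ) :=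
      lt_of_le_of_ne (by exact_mod_cast hnp) (fun hh => hpne (Fin.ext hh))
    -- build a 2143 pattern
    have hwq : w (w.symm b2) = b2 := Equiv.apply_symm_apply w b2
    have hk0p : (k0 : ℕ) < ((w.symm b1 : Fin n) : ℕ) := by
      have : (a1 : ℕ) < ((w.symm b1 : Fin n) : ℕ) := ha1
      omega
    have hpa2 : ((w.symm b1 : Fin n) : ℕ) ≠ (a2 : ℕ) := by
      intro hh
      have : w.symm b1 = a2 := Fin.ext hh
      rw [this] at hwp
      have : (b2 : ℕ) < (b1 : ℕ) := by
        have := hb2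
        rw [hwp] at this
        exact this
      omega
    apply hw
    by_cases hpc : ((w.symm b1 : Fin n) : ℕ) < (a2 : ℕ)
    · refine ⟨k0, w.symm b1, a2, w.symm b2, ?_, ?_, ?_, ?_, ?_, ?_⟩
      · exact Fin.lt_def.mpr hk0p
      · exact Fin.lt_def.mpr hpc
      · exact ha2
      · rw [hwp, Fin.lt_def]; omega
      · rw [hwq, Fin.lt_def]; omega
      · rw [hwq]; exact hb2
    · refine ⟨k0, w.symm b1, a3, w.symm b2, ?_, ?_, ?_, ?_, ?_, ?_⟩
      · exact Fin.lt_def.mpr hk0p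
      · exact Fin.lt_def.mpr hplt
      · exact ha3
      · rw [hwp, Fin.lt_def]; omega
      · rw [hwq, Fin.lt_def]; omega
      · rw [hwq]; exact hb3
  -- assemble membership
  rw [RotheDiagram, Finset.mem_image]
  exact ⟨(a3, b1), by
    simp only [Finset.mem_filter, Finset.mem_univ, true_and]
    exact ⟨ha3p, hb1a3⟩, rfl⟩
end

section
/- Let w ∈ S_n be a vexillary permutation, let (i, j_1), (i, j_2) ∈ D(w), and suppose that the square (i, j_1) has more squares of D(w) below it in its column than (i, j_2) does, i.e., #{i' > i : (i', j_1) ∈ D(w)} > #{i' > i : (i', j_2) ∈ D(w)}. Then for every i' > i, (i', j_2) ∈ D(w) implies (i', j_1) ∈ D(w). -/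
open MvPolynomial

lemma mem_rothe_iff {n : ℕ} (w : Equiv.Perm (Fin n)) (a b : ℕ) :
    (a, b) ∈ RotheDiagram n w ↔
      ∃ x y : Fin n, (x : ℕ) + 1 = a ∧ (y : ℕ) + 1 = b ∧ x < w.symm y ∧ y < w x := by
  simp [RotheDiagram, Prod.ext_iff]
  aesop

/-- Core combinatorial lemma: incomparable columns force a 2143 pattern. -/
lemma rothe_core {n : ℕ} (w : Equiv.Perm (Fin n)) (hw : Vexillary w)
    (ρ x' c1 c2 : Fin n) (hc : c1 ≠ c2)
    (hρ1 : ρ < w.symm c1 ∧ c1 < w ρ) (hρ2 : ¬(ρ < w.symm c2 ∧ c2 < w ρ))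
    (hx'2 : x' < w.symm c2 ∧ c2 < w x') (hx'1 : ¬(x' < w.symm c1 ∧ c1 < w x')) :
    False := by
  set p := w.symm c1 with hp
  set q := w.symm c2 with hq
  have hwp : w p = c1 := w.apply_symm_apply c1
  have hwq : w q = c2 := w.apply_symm_apply c2
  rcases lt_or_gt_of_ne hc with h12 | h21
  · -- c1 < c2
    have hc1wx' : c1 < w x' := h12.trans hx'2.2
    have hpx' : p ≤ x' := le_of_not_gt (fun h => hx'1 ⟨h, hc1wx'⟩)
    have hρq : ρ < q := lt_of_lt_of_le hρ1.1 (le_trans hpx' (le_of_lt hx'2.1))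
    have hwρ : w ρ ≤ c2 := le_of_not_gt (fun h => hρ2 ⟨hρq, h⟩)
    have hwρ' : w ρ < c2 := lt_of_le_of_ne hwρ (by
      intro he
      have : ρ = q := by rw [hq, ← he, Equiv.symm_apply_apply]
      exact absurd hρq (by rw [this]; exact lt_irrefl _))
    have hpx'' : p < x' := lt_of_le_of_ne hpx' (by
      intro he; rw [he] at hwp; rw [hwp] at hc1wx'; exact lt_irrefl _ hc1wx')
    exact hw ⟨ρ, p, x', q, hρ1.1, hpx'', hx'2.1,
      by rw [hwp]; exact hρ1.2, by rw [hwq]; exact hwρ', by rw [hwq]; exact hx'2.2⟩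
  · -- c2 < c1
    have hqρ : q ≤ ρ := le_of_not_gt (fun h => hρ2 ⟨h, h21.trans hρ1.2⟩)
    have hqρ' : q < ρ := lt_of_le_of_ne hqρ (by
      intro he; rw [he] at hwq; exact absurd (hwq ▸ (h21.trans hρ1.2)) (lt_irrefl _))
    have hx'q : x' < q := hx'2.1
    have hx'p : x' < p := lt_trans (lt_trans hx'q hqρ') hρ1.1
    have hwx' : w x' ≤ c1 := le_of_not_gt (fun h => hx'1 ⟨hx'p, h⟩)
    have hwx'' : w x' < c1 := lt_of_le_of_ne hwx' (by
      intro he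
      have : x' = p := by rw [hp, ← he, Equiv.symm_apply_apply]
      exact absurd hx'p (by rw [this]; exact lt_irrefl _))
    exact hw ⟨x', q, ρ, p, hx'q, hqρ', hρ1.1,
      by rw [hwq]; exact hx'2.2, by rw [hwp]; exact hwx'', by rw [hwp]; exact hρ1.2⟩

theorem stmt_14 (n : ℕ) (w : Equiv.Perm (Fin n)) (hw : Vexillary w)
    (i j1 j2 : ℕ) (h1 : (i, j1) ∈ RotheDiagram n w) (h2 : (i, j2) ∈ RotheDiagram n w)
    (hcount : belowCount (RotheDiagram n w) (i, j2) <
      belowCount (RotheDiagram n w) (i, j1)) :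
    ∀ i' > i, (i', j2) ∈ RotheDiagram n w → (i', j1) ∈ RotheDiagram n w := by
  intro i' hii' hmem2
  by_contra hnot
  set D := RotheDiagram n w with hD
  -- find r > i with (r, j1) ∈ D and (r, j2) ∉ D
  have hex : ∃ r, i < r ∧ (r, j1) ∈ D ∧ (r, j2) ∉ D := by
    by_contra hcon
    push_neg at hcon
    have : (D.filter fun t => t.2 = j1 ∧ i < t.1).card ≤
        (D.filter fun t => t.2 = j2 ∧ i < t.1).card := by
      apply Finset.card_le_card_of_injOn (fun t => (t.1, j2))
      · intro t ht
        simp only [Finset.mem_coe, Finset.mem_filter] at ht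
        obtain ⟨htD, ht1, ht2⟩ := ht
        exact Finset.mem_filter.mpr ⟨hcon t.1 ht2 (by rw [← ht1]; exact htD), rfl, ht2⟩
      · intro a ha b hb hab
        simp only [Finset.coe_filter, Set.mem_setOf_eq] at ha hb
        have h2 : a.1 = b.1 := (Prod.ext_iff.mp hab).1
        exact Prod.ext h2 (ha.2.1.trans hb.2.1.symm)
    exact absurd hcount (not_lt.mpr this)
  obtain ⟨r, hir, hr1, hr2⟩ := hex
  have hj : j1 ≠ j2 := by
    intro he; rw [he] at hcount; exact lt_irrefl _ hcount
  rw [mem_rothe_iff] at hr1 hmem2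
  obtain ⟨ρ, c1, hρ1, hc1, hρmem⟩ := hr1
  obtain ⟨x', c2, hx'1, hc2, hx'mem⟩ := hmem2
  have hr2' : ¬(ρ < w.symm c2 ∧ c2 < w ρ) := by
    intro h
    exact hr2 ((mem_rothe_iff w r j2).mpr ⟨ρ, c2, hρ1, hc2, h⟩)
  have hnot' : ¬(x' < w.symm c1 ∧ c1 < w x') := by
    intro h
    exact hnot ((mem_rothe_iff w i' j1).mpr ⟨x', c1, hx'1, hc1, h⟩)
  have hc : c1 ≠ c2 := by
    intro he; apply hj; rw [← hc1, ← hc2, he]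
  exact rothe_core w hw ρ x' c1 c2 hc ⟨hρmem.1, hρmem.2⟩ hr2' ⟨hx'mem.1, hx'mem.2⟩ hnot'
end

section
/- Let w ∈ S_n be a vexillary permutation, let (i_1, j_1), (i_2, j_2) ∈ D(w) be two linked squares with j_1 < j_2, and let i_1' ≤ i_1 be minimal such that (i, j_1) ∈ D(w) for all i with i_1' ≤ i ≤ i_1. Then there are exactly i_1 − i_1' indices k with i_1' ≤ k < i_2 and (k, j_2) ∈ D(w); furthermore, writing these indices as k_1 < … < k_{i_1 − i_1'}, the square (k_m, j_2) is linked to (i_1' + m − 1, j_1) for every m ∈ [i_1 − i_1']. -/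
open MvPolynomial

private lemma fin_filter_lt_card (c m : ℕ) (h : m ≤ c) :
    (Finset.univ.filter fun k : Fin c => (k : ℕ) < m).card = m := by
  apply Finset.card_eq_of_bijective (fun i hi => ⟨i, lt_of_lt_of_le hi h⟩)
  · intro a ha
    simp only [Finset.mem_filter] at ha
    exact ⟨a, ha.2, rfl⟩
  · intro i hi
    simp [hi]
  · intro i j hi hj hij
    simpa using congrArg Fin.val hij

/-- Counting function: number of `t < i` (1-based) with `w(t) > j`. -/
private def Acnt (n : ℕ) (w : Equiv.Perm (Fin n)) (j i : ℕ) : ℕ :=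
  (Finset.univ.filter fun k : Fin n => (k : ℕ) + 1 < i ∧ j < (w k : ℕ) + 1).card

private lemma mem_rothe {n : ℕ} {w : Equiv.Perm (Fin n)} {i j : ℕ} :
    (i, j) ∈ RotheDiagram n w ↔
      ∃ p q : Fin n, i = (p : ℕ) + 1 ∧ j = (q : ℕ) + 1 ∧ p < w.symm q ∧ q < w p := by
  simp only [RotheDiagram, Finset.mem_image, Finset.mem_filter, Finset.mem_univ, true_and,
    Prod.mk.injEq, Prod.exists]
  constructor
  · rintro ⟨p, q, ⟨h1, h2⟩, h3, h4⟩; exact ⟨p, q, h3.symm, h4.symm, h1, h2⟩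
  · rintro ⟨p, q, h3, h4, h1, h2⟩; exact ⟨p, q, ⟨h1, h2⟩, h3.symm, h4.symm⟩

private lemma Asplit (n : ℕ) (w : Equiv.Perm (Fin n)) (j i i' : ℕ) (h : i ≤ i') :
    Acnt n w j i' = Acnt n w j i +
      (Finset.univ.filter fun k : Fin n =>
        i ≤ (k : ℕ) + 1 ∧ (k : ℕ) + 1 < i' ∧ j < (w k : ℕ) + 1).card := by
  unfold Acnt
  rw [← Finset.card_union_of_disjoint ?dis]
  case dis =>
    rw [Finset.disjoint_left]
    intro k hk hk'
    simp only [Finset.mem_filter] at hk hk'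
    omega
  congr 1
  ext k
  simp only [Finset.mem_filter, Finset.mem_union, Finset.mem_univ, true_and]
  constructor
  · rintro ⟨h1, h2⟩
    rcases lt_or_ge ((k : ℕ) + 1) i with h3 | h3
    · exact Or.inl ⟨h3, h2⟩
    · exact Or.inr ⟨h3, h1, h2⟩
  · rintro (⟨h1, h2⟩ | ⟨h1, h2, h3⟩)
    exacts [⟨h1.trans_le h, h2⟩, ⟨h2, h3⟩]

private lemma Amono (n : ℕ) (w : Equiv.Perm (Fin n)) {j j' : ℕ} (i : ℕ) (h : j ≤ j') :
    Acnt n w j' i ≤ Acnt n w j i := by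
  apply Finset.card_le_card
  intro k hk
  simp only [Finset.mem_filter] at hk ⊢
  exact ⟨hk.1, hk.2.1, by omega⟩

private lemma no_col_hit {n : ℕ} {w : Equiv.Perm (Fin n)} {p q : Fin n} (hpq : p < w.symm q)
    {i : ℕ} (hi : i ≤ (p : ℕ) + 1) : ∀ k : Fin n, (k : ℕ) + 1 < i → (w k : ℕ) + 1 ≠ (q : ℕ) + 1 := by
  intro k hk he
  have h1 : w k = q := Fin.val_injective (by omega)
  have h2 : k = w.symm q := by rw [← h1]; simp
  have h3 := Fin.lt_def.mp hpq
  have h4 : (k : ℕ) = (w.symm q : ℕ) := by rw [h2]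
  omega

private lemma rank_eq (n : ℕ) (w : Equiv.Perm (Fin n)) (i j : ℕ) (h1 : 1 ≤ i) (h2 : i ≤ n + 1)
    (h3 : ∀ k : Fin n, (k : ℕ) + 1 < i → (w k : ℕ) + 1 ≠ j) :
    RotheRank n w (i, j) = (i : ℤ) - 1 - (Acnt n w j i : ℤ) := by
  have key : (Finset.univ.filter fun k : Fin n => (k : ℕ) + 1 < i ∧ (w k : ℕ) + 1 < j).card
      + Acnt n w j i = i - 1 := by
    unfold Acnt
    rw [← Finset.card_union_of_disjoint ?dis]
    case dis =>
      rw [Finset.disjoint_left]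
      intro k hk hk'
      simp only [Finset.mem_filter] at hk hk'
      omega
    have : ((Finset.univ.filter fun k : Fin n => (k : ℕ) + 1 < i ∧ (w k : ℕ) + 1 < j) ∪
        Finset.univ.filter fun k : Fin n => (k : ℕ) + 1 < i ∧ j < (w k : ℕ) + 1) =
        Finset.univ.filter fun k : Fin n => (k : ℕ) < i - 1 := by
      ext k
      simp only [Finset.mem_union, Finset.mem_filter, Finset.mem_univ, true_and]
      constructor
      · rintro (⟨ha, _⟩ | ⟨ha, _⟩) <;> omega
      · intro hk
        have hki : (k : ℕ) + 1 < i := by omega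
        have := h3 k hki
        rcases lt_trichotomy ((w k : ℕ) + 1) j with h | h | h
        · exact Or.inl ⟨hki, h⟩
        · exact absurd h this
        · exact Or.inr ⟨hki, h⟩
    rw [this, fin_filter_lt_card n (i - 1) (by omega)]
  show ((Finset.univ.filter fun k : Fin n => (k : ℕ) + 1 < i ∧ (w k : ℕ) + 1 < j).card : ℤ) = _
  omega

private lemma sort_getElem_lt {K : Finset ℕ} {a b : ℕ} (ha : a < (K.sort (· ≤ ·)).length)
    (hb : b < (K.sort (· ≤ ·)).length) (hab : a < b) :
    (K.sort (· ≤ ·))[a] < (K.sort (· ≤ ·))[b] := by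
  have := ((Finset.sortedLT_sort K).getElem_lt_getElem_iff (hi := ha) (hj := hb)).mpr hab
  simpa using this

private lemma count_lt_sort (K : Finset ℕ) (m : ℕ) (hm : m < K.card) :
    ((K.sort (· ≤ ·)).getD m 0 ∈ K) ∧
      (K.filter fun x => x < (K.sort (· ≤ ·)).getD m 0).card = m := by
  have hlen : (K.sort (· ≤ ·)).length = K.card := Finset.length_sort _
  have hm' : m < (K.sort (· ≤ ·)).length := by omega
  rw [List.getD_eq_getElem _ _ hm']
  refine ⟨(Finset.mem_sort (α := ℕ) (· ≤ ·)).mp (List.getElem_mem _), ?_⟩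
  have himg : (K.filter fun x => x < (K.sort (· ≤ ·))[m]) =
      (Finset.univ.filter fun a : Fin (K.sort (· ≤ ·)).length => (a : ℕ) < m).image
        (fun a : Fin (K.sort (· ≤ ·)).length => (K.sort (· ≤ ·))[(a : ℕ)]'a.isLt) := by
    ext x
    simp only [Finset.mem_filter, Finset.mem_image, Finset.mem_univ, true_and]
    constructor
    · rintro ⟨hxK, hxlt⟩
      obtain ⟨a, ha, hax⟩ :=
        List.mem_iff_getElem.mp ((Finset.mem_sort (α := ℕ) (· ≤ ·)).mpr hxK)
      refine ⟨⟨a, ha⟩, ?_, hax⟩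
      show a < m
      by_contra hge
      rcases eq_or_lt_of_le (not_lt.mp hge) with he | hlt
      · subst he; omega
      · have := sort_getElem_lt hm' ha hlt
        omega
    · rintro ⟨a, ham, rfl⟩
      exact ⟨(Finset.mem_sort (α := ℕ) (· ≤ ·)).mp (List.getElem_mem _),
        sort_getElem_lt a.2 hm' ham⟩
  rw [himg, Finset.card_image_of_injOn, fin_filter_lt_card _ m (by omega)]
  intro a _ b _ hab
  by_contra hne
  rcases lt_or_gt_of_ne hne with h | h
  · exact absurd hab (ne_of_lt (sort_getElem_lt a.2 b.2 h))
  · exact absurd hab.symm (ne_of_lt (sort_getElem_lt b.2 a.2 h))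
theorem stmt_15 (n : ℕ) (w : Equiv.Perm (Fin n)) (hw : Vexillary w)
    (i1 j1 i2 j2 : ℕ) (h1 : (i1, j1) ∈ RotheDiagram n w) (h2 : (i2, j2) ∈ RotheDiagram n w)
    (hlink : RLinked n w (i1, j1) (i2, j2)) (hj : j1 < j2)
    (i1' : ℕ) (hle : i1' ≤ i1)
    (hseg : ∀ i, i1' ≤ i → i ≤ i1 → (i, j1) ∈ RotheDiagram n w)
    (hmin : ∀ i'', (∀ i, i'' ≤ i → i ≤ i1 → (i, j1) ∈ RotheDiagram n w) → i1' ≤ i'') :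
    ((Finset.Ico i1' i2).filter fun x => (x, j2) ∈ RotheDiagram n w).card = i1 - i1' ∧
      ∀ m < ((Finset.Ico i1' i2).filter fun x => (x, j2) ∈ RotheDiagram n w).card,
        RLinked n w
          ((((Finset.Ico i1' i2).filter fun x =>
              (x, j2) ∈ RotheDiagram n w).sort (· ≤ ·)).getD m 0, j2)
          (i1' + m, j1) := by
  obtain ⟨p1, q1, hi1, hj1v, hp1, hq1⟩ := mem_rothe.mp h1
  obtain ⟨p2, q2, hi2, hj2v, hp2, hq2⟩ := mem_rothe.mp h2
  have hp1' := Fin.lt_def.mp hp1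
  have hq1' := Fin.lt_def.mp hq1
  have hp2' := Fin.lt_def.mp hp2
  have hq2' := Fin.lt_def.mp hq2
  have hp1n : (p1 : ℕ) < n := p1.isLt
  have hp2n : (p2 : ℕ) < n := p2.isLt
  have hwq1n : ((w.symm q1 : Fin n) : ℕ) < n := (w.symm q1).isLt
  have hwq2n : ((w.symm q2 : Fin n) : ℕ) < n := (w.symm q2).isLt
  have hi1'pos : 1 ≤ i1' := by
    obtain ⟨p, q, hp, -⟩ := mem_rothe.mp (hseg i1' le_rfl hle)
    omega
  have hr1 : RotheRank n w (i1, j1) = (i1 : ℤ) - 1 - (Acnt n w j1 i1 : ℤ) :=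
    rank_eq n w i1 j1 (by omega) (by omega) (by rw [hj1v]; exact no_col_hit hp1 (by omega))
  have hr2 : RotheRank n w (i2, j2) = (i2 : ℤ) - 1 - (Acnt n w j2 i2 : ℤ) :=
    rank_eq n w i2 j2 (by omega) (by omega) (by rw [hj2v]; exact no_col_hit hp2 (by omega))
  have hlink' : Acnt n w j1 i1 = Acnt n w j2 i2 := by
    have h : (i1 : ℤ) - (i2 : ℤ) = RotheRank n w (i1, j1) - RotheRank n w (i2, j2) := hlink
    rw [hr1, hr2] at h
    omega
  have hF1 : ∀ m, m ≤ i1 - i1' → Acnt n w j1 (i1' + m) = Acnt n w j1 i1' + m := by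
    intro m hm
    induction m with
    | zero => simp
    | succ m ih =>
      obtain ⟨p, q, hp, hq, -, hlt2⟩ := mem_rothe.mp (hseg (i1' + m) (by omega) (by omega))
      have hqq : q = q1 := Fin.val_injective (by omega)
      subst hqq
      have hlt2' := Fin.lt_def.mp hlt2
      have hone : (Finset.univ.filter fun k : Fin n =>
          i1' + m ≤ (k : ℕ) + 1 ∧ (k : ℕ) + 1 < i1' + m + 1 ∧ j1 < (w k : ℕ) + 1) = {p} := by
        ext k
        simp only [Finset.mem_filter, Finset.mem_univ, true_and, Finset.mem_singleton]
        constructor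
        · rintro ⟨ha, hb, -⟩
          exact Fin.val_injective (by omega)
        · rintro rfl
          exact ⟨by omega, by omega, by omega⟩
      have hsp := Asplit n w j1 (i1' + m) (i1' + m + 1) (by omega)
      rw [hone, Finset.card_singleton] at hsp
      rw [show i1' + (m + 1) = i1' + m + 1 by omega, hsp, ih (by omega)]
      omega
  by_cases hcase : i1' ≤ i2
  · -- main case
    have hF2 : Acnt n w j1 i1' = Acnt n w j2 i1' := by
      unfold Acnt
      congr 1
      ext k
      simp only [Finset.mem_filter, Finset.mem_univ, true_and]
      constructor
      · rintro ⟨hk, hwk⟩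
        refine ⟨hk, ?_⟩
        by_contra hle2
        have hkq2 : (w k : ℕ) ≠ (q2 : ℕ) := by
          intro he
          have h1' : w k = q2 := Fin.val_injective he
          have h2' : k = w.symm q2 := by rw [← h1']; simp
          have h3' : (k : ℕ) = (w.symm q2 : ℕ) := by rw [h2']
          omega
        have hwk2 : (w k : ℕ) < (q2 : ℕ) := by omega
        have hnot : (i1' - 1, j1) ∉ RotheDiagram n w := by
          intro hmem
          have hcontr := hmin (i1' - 1) (fun i hia hib => by
            rcases Nat.eq_or_lt_of_le hia with he | hlt
            · rw [← he]; exact hmem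
            · exact hseg i (by omega) hib)
          omega
        have hpsn : i1' - 2 < n := by omega
        set ps : Fin n := ⟨i1' - 2, hpsn⟩ with hps
        have hpsv : (ps : ℕ) = i1' - 2 := rfl
        have hws : (w ps : ℕ) < (q1 : ℕ) := by
          by_contra hge
          have hnee : (w ps : ℕ) ≠ (q1 : ℕ) := by
            intro he
            have h1' : w ps = q1 := Fin.val_injective he
            have h2' : ps = w.symm q1 := by rw [← h1']; simp
            have h3' : (ps : ℕ) = (w.symm q1 : ℕ) := by rw [h2']
            omega
          apply hnot
          rw [mem_rothe]
          refine ⟨ps, q1, by omega, hj1v, ?_, ?_⟩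
          · rw [Fin.lt_def]; omega
          · rw [Fin.lt_def]; omega
        have hkps : (k : ℕ) < (ps : ℕ) := by
          have hne : (k : ℕ) ≠ i1' - 2 := by
            intro he
            have hkp : k = ps := Fin.val_injective (by rw [hpsv]; exact he)
            rw [hkp] at hwk
            omega
          omega
        exact hw ⟨k, ps, p2, w.symm q2,
          by rw [Fin.lt_def]; omega,
          by rw [Fin.lt_def]; omega,
          hp2,
          by rw [Fin.lt_def]; omega,
          by rw [Fin.lt_def]; simp only [Equiv.apply_symm_apply]; omega,
          by rw [Fin.lt_def]; simp only [Equiv.apply_symm_apply]; omega⟩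
      · rintro ⟨hk, hwk⟩
        exact ⟨hk, by omega⟩
    have hmemcol : ∀ x, i1' ≤ x → x < i2 →
        ((x, j2) ∈ RotheDiagram n w ↔ ∃ k : Fin n, x = (k : ℕ) + 1 ∧ j2 < (w k : ℕ) + 1) := by
      intro x hx1 hx2
      constructor
      · intro hm
        obtain ⟨p, q, hp, hq, -, h4⟩ := mem_rothe.mp hm
        have h4' := Fin.lt_def.mp h4
        exact ⟨p, hp, by omega⟩
      · rintro ⟨k, hxk, hk⟩
        rw [mem_rothe]
        refine ⟨k, q2, hxk, hj2v, ?_, ?_⟩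
        · rw [Fin.lt_def]; omega
        · rw [Fin.lt_def]; omega
    set K := (Finset.Ico i1' i2).filter (fun x => (x, j2) ∈ RotheDiagram n w) with hK
    set T := Finset.univ.filter (fun k : Fin n =>
      i1' ≤ (k : ℕ) + 1 ∧ (k : ℕ) + 1 < i2 ∧ j2 < (w k : ℕ) + 1) with hT
    have hinj : Function.Injective (fun k : Fin n => (k : ℕ) + 1) := by
      intro a b hab
      exact Fin.val_injective (by simpa using hab)
    have hKT : K = T.image (fun k : Fin n => (k : ℕ) + 1) := by
      rw [hK, hT]
      ext x
      simp only [Finset.mem_filter, Finset.mem_Ico, Finset.mem_image, Finset.mem_univ,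
        true_and]
      constructor
      · rintro ⟨⟨hx1, hx2⟩, hm⟩
        obtain ⟨k, hk1, hk2⟩ := (hmemcol x hx1 hx2).mp hm
        exact ⟨k, ⟨by omega, by omega, hk2⟩, hk1.symm⟩
      · rintro ⟨k, ⟨ha, hb, hc⟩, rfl⟩
        exact ⟨⟨ha, hb⟩, (hmemcol _ ha hb).mpr ⟨k, rfl, hc⟩⟩
    have hcardKT : K.card = T.card := by
      rw [hKT, Finset.card_image_of_injective _ hinj]
    have hsplit2 : Acnt n w j2 i2 = Acnt n w j2 i1' + T.card := Asplit n w j2 i1' i2 hcase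
    have hfull := hF1 (i1 - i1') le_rfl
    rw [Nat.add_sub_cancel' hle] at hfull
    have hcard : K.card = i1 - i1' := by omega
    refine ⟨hcard, ?_⟩
    intro m hm
    obtain ⟨hk0K, hcnt⟩ := count_lt_sort K m hm
    set k0 := (K.sort (· ≤ ·)).getD m 0 with hk0
    rw [hK] at hk0K
    simp only [Finset.mem_filter, Finset.mem_Ico] at hk0K
    obtain ⟨⟨hk0a, hk0b⟩, hk0D⟩ := hk0K
    have hsplitk : Acnt n w j2 k0 = Acnt n w j2 i1' +
        (Finset.univ.filter fun k : Fin n =>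
          i1' ≤ (k : ℕ) + 1 ∧ (k : ℕ) + 1 < k0 ∧ j2 < (w k : ℕ) + 1).card :=
      Asplit n w j2 i1' k0 hk0a
    have hWT : (Finset.univ.filter fun k : Fin n =>
        i1' ≤ (k : ℕ) + 1 ∧ (k : ℕ) + 1 < k0 ∧ j2 < (w k : ℕ) + 1) =
        T.filter (fun k : Fin n => (k : ℕ) + 1 < k0) := by
      rw [hT]
      ext k
      simp only [Finset.mem_filter, Finset.mem_univ, true_and]
      constructor
      · rintro ⟨ha, hb, hc⟩; exact ⟨⟨ha, by omega, hc⟩, hb⟩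
      · rintro ⟨⟨ha, hb, hc⟩, hd⟩; exact ⟨ha, hd, hc⟩
    have hfiltcard : (K.filter (fun x => x < k0)).card =
        (T.filter (fun k : Fin n => (k : ℕ) + 1 < k0)).card := by
      rw [hKT, Finset.filter_image, Finset.card_image_of_injective _ hinj]
    have hAk0 : Acnt n w j2 k0 = Acnt n w j2 i1' + m := by
      rw [hsplitk, hWT]
      rw [← hfiltcard, hcnt]
    have hAm : Acnt n w j1 (i1' + m) = Acnt n w j1 i1' + m := hF1 m (by omega)
    have hrk0 : RotheRank n w (k0, j2) = (k0 : ℤ) - 1 - (Acnt n w j2 k0 : ℤ) :=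
      rank_eq n w k0 j2 (by omega) (by omega)
        (by rw [hj2v]; exact no_col_hit hp2 (by omega))
    have hrm : RotheRank n w (i1' + m, j1) =
        ((i1' + m : ℕ) : ℤ) - 1 - (Acnt n w j1 (i1' + m) : ℤ) :=
      rank_eq n w (i1' + m) j1 (by omega) (by omega)
        (by rw [hj1v]; exact no_col_hit hp1 (by omega))
    show (k0 : ℤ) - ((i1' + m : ℕ) : ℤ) = RotheRank n w (k0, j2) - RotheRank n w (i1' + m, j1)
    rw [hrk0, hrm]
    omega
  · push_neg at hcase
    have hA12 : Acnt n w j1 i2 ≤ Acnt n w j1 i1' := by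
      have := Asplit n w j1 i2 i1' (by omega)
      omega
    have hmono : Acnt n w j2 i2 ≤ Acnt n w j1 i2 := Amono n w i2 (by omega)
    have hfull := hF1 (i1 - i1') le_rfl
    rw [Nat.add_sub_cancel' hle] at hfull
    have hi1eq : i1 = i1' := by omega
    have hIco : Finset.Ico i1' i2 = ∅ := Finset.Ico_eq_empty (by omega)
    rw [hIco]
    simp only [Finset.filter_empty, Finset.card_empty]
    exact ⟨by omega, fun m hm => absurd hm (Nat.not_lt_zero m)⟩
end

section
/- Let 𝒟 = (D, r, F) be a bubbling diagram and let 𝒟' = (D', r', F') ∈ BD(𝒟). Suppose that column j of 𝒟' has at least a_j live squares and column k of 𝒟' has at least a_k live squares, and that the a_j-th highest live square of column j of 𝒟' is linked (with respect to r') to the a_k-th highest live square of column k of 𝒟'. Then columns j and k of 𝒟 have at least a_j and a_k live squares respectively, and the a_j-th highest live square of column j of 𝒟 is linked (with respect to r) to the a_k-th highest live square of column k of 𝒟. -/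
open MvPolynomial

lemma sort_image_of_strictMonoOn (S : Finset ℕ) (f : ℕ → ℕ)
    (hf : ∀ a ∈ S, ∀ b ∈ S, a < b → f a < f b) :
    (S.image f).sort (· ≤ ·) = (S.sort (· ≤ ·)).map f := by
  have hinj : Set.InjOn f S := fun a ha b hb hab => by
    rcases lt_trichotomy a b with h|h|h
    · exact absurd hab (hf a ha b hb h).ne
    · exact h
    · exact absurd hab.symm (hf b hb a ha h).ne
  have hperm : List.Perm ((S.image f).sort (· ≤ ·)) ((S.sort (· ≤ ·)).map f) := by
    rw [← Multiset.coe_eq_coe, Finset.sort_eq, Finset.image_val_of_injOn hinj,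
      ← Multiset.map_coe, Finset.sort_eq]
  refine List.Perm.eq_of_pairwise' (Finset.pairwise_sort _ _) ?_ hperm
  have h1 : List.Pairwise (fun a b => f a ≤ f b) (S.sort (· ≤ ·)) := by
    refine List.Pairwise.imp_of_mem ?_ (Finset.sortedLT_sort S).pairwise
    intro a b ha hb hab
    exact (hf a ((Finset.mem_sort _).mp ha) b ((Finset.mem_sort _).mp hb) hab).le
  exact (List.pairwise_map).mpr h1

lemma mem_liveCol {B : BubblingDiagram} {c x : ℕ} :
    x ∈ liveCol B c ↔ (x, c) ∈ B.D ∧ (x, c) ∉ B.F := by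
  simp only [liveCol, Finset.mem_image, Finset.mem_filter, Finset.mem_sdiff]
  constructor
  · rintro ⟨⟨a, b⟩, ⟨⟨hD, hF⟩, rfl⟩, rfl⟩
    exact ⟨hD, hF⟩
  · rintro ⟨hD, hF⟩
    exact ⟨(x, c), ⟨⟨hD, hF⟩, rfl⟩, rfl⟩

lemma step_invariant (B C : BubblingDiagram)
    (h : IsBubbleMove B C ∨ IsKBubbleMove B C) (c : ℕ) :
    (liveCol C c).card = (liveCol B c).card ∧
    ∀ a, 1 ≤ a → a ≤ (liveCol B c).card →
      (nthLiveRow C c a : ℤ) - C.r (nthLiveRow C c a, c) =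
        (nthLiveRow B c a : ℤ) - B.r (nthLiveRow B c a, c) := by
  obtain ⟨i, j, hi2, hD, hF, hup, hcr, hcol⟩ :
      ∃ i j : ℕ, 2 ≤ i ∧ (i, j) ∈ B.D ∧ (i, j) ∉ B.F ∧ (i - 1, j) ∉ B.D ∧
        C.r = Function.update B.r (i - 1, j) (B.r (i, j) - 1) ∧
        ∀ c, liveCol C c =
          if c = j then insert (i - 1) ((liveCol B j).erase i) else liveCol B c := by
    rcases h with ⟨i, j, hi2, hD, hF, hup, hCD, hCF, hcr⟩ |
      ⟨i, j, hi2, hD, hF, hup, _, hCD, hCF, hcr⟩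
    · refine ⟨i, j, hi2, hD, hF, hup, hcr, fun c => ?_⟩
      have hupF : (i - 1, j) ∉ B.F := fun hx => hup (B.F_subset hx)
      ext x
      by_cases hc : c = j
      · rw [hc, if_pos rfl, Finset.mem_insert, Finset.mem_erase, mem_liveCol,
          mem_liveCol, hCD, hCF, Finset.mem_insert, Finset.mem_erase]
        constructor
        · rintro ⟨h1 | ⟨h1, h1D⟩, h2⟩
          · exact Or.inl (Prod.ext_iff.mp h1).1
          · exact Or.inr ⟨fun hx => h1 (by rw [hx]), h1D, h2⟩
        · rintro (rfl | ⟨hx, hxD, hxF⟩)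
          · exact ⟨Or.inl rfl, hupF⟩
          · exact ⟨Or.inr ⟨fun hp => hx (Prod.ext_iff.mp hp).1, hxD⟩, hxF⟩
      · rw [if_neg hc, mem_liveCol, mem_liveCol, hCD, hCF, Finset.mem_insert,
          Finset.mem_erase]
        have hne1 : (x, c) ≠ (i - 1, j) := fun hp => hc (Prod.ext_iff.mp hp).2
        have hne2 : (x, c) ≠ (i, j) := fun hp => hc (Prod.ext_iff.mp hp).2
        simp [hne1, hne2]
    · refine ⟨i, j, hi2, hD, hF, hup, hcr, fun c => ?_⟩
      have hupF : (i - 1, j) ∉ B.F := fun hx => hup (B.F_subset hx)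
      have hii : i - 1 ≠ i := by omega
      ext x
      by_cases hc : c = j
      · rw [hc, if_pos rfl, Finset.mem_insert, Finset.mem_erase, mem_liveCol,
          mem_liveCol, hCD, hCF, Finset.mem_insert, Finset.mem_insert]
        constructor
        · rintro ⟨h1 | h1, h2⟩
          · exact Or.inl (Prod.ext_iff.mp h1).1
          · refine Or.inr ⟨fun hx => h2 (Or.inl (by rw [hx])), h1, fun hf => h2 (Or.inr hf)⟩
        · rintro (rfl | ⟨hx, hxD, hxF⟩)
          · refine ⟨Or.inl rfl, ?_⟩
            rintro (hp | hp)
            · exact hii (Prod.ext_iff.mp hp).1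
            · exact hupF hp
          · refine ⟨Or.inr hxD, ?_⟩
            rintro (hp | hp)
            · exact hx (Prod.ext_iff.mp hp).1
            · exact hxF hp
      · rw [if_neg hc, mem_liveCol, mem_liveCol, hCD, hCF, Finset.mem_insert,
          Finset.mem_insert]
        have hne1 : (x, c) ≠ (i - 1, j) := fun hp => hc (Prod.ext_iff.mp hp).2
        have hne2 : (x, c) ≠ (i, j) := fun hp => hc (Prod.ext_iff.mp hp).2
        simp [hne1, hne2]
  have hiL : i ∈ liveCol B j := mem_liveCol.mpr ⟨hD, hF⟩
  have hi1L : i - 1 ∉ liveCol B j := fun hx => hup (mem_liveCol.mp hx).1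
  by_cases hc : c = j
  · rw [hc]
    set L := liveCol B j with hL
    set f : ℕ → ℕ := fun x => if x = i then i - 1 else x with hfdef
    have hmono : ∀ a ∈ L, ∀ b ∈ L, a < b → f a < f b := by
      intro a ha b hb hab
      by_cases h1 : a = i
      · by_cases h2 : b = i
        · omega
        · have hib : i < b := h1 ▸ hab
          simp only [hfdef, if_pos h1, if_neg h2]
          omega
      · by_cases h2 : b = i
        · have hai : a < i := h2 ▸ hab
          have hane : a ≠ i - 1 := fun hx => hi1L (hx ▸ ha)
          simp only [hfdef, if_neg h1, if_pos h2]
          omega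
        · simpa only [hfdef, if_neg h1, if_neg h2] using hab
    have himg : liveCol C j = L.image f := by
      rw [hcol j, if_pos rfl]
      ext x
      simp only [Finset.mem_insert, Finset.mem_erase, Finset.mem_image]
      constructor
      · rintro (rfl | ⟨hx, hxL⟩)
        · exact ⟨i, hiL, if_pos rfl⟩
        · exact ⟨x, hxL, if_neg hx⟩
      · rintro ⟨y, hy, rfl⟩
        by_cases hyi : y = i
        · exact Or.inl (by simp [hfdef, hyi])
        · refine Or.inr ⟨?_, ?_⟩
          · simpa [hfdef, if_neg hyi] using hyi
          · simpa [hfdef, if_neg hyi] using hy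
    have hsort : (liveCol C j).sort (· ≤ ·) = (L.sort (· ≤ ·)).map f := by
      rw [himg]; exact sort_image_of_strictMonoOn L f hmono
    have hcard : (liveCol C j).card = L.card := by
      rw [← Finset.length_sort (· ≤ ·), hsort, List.length_map, Finset.length_sort]
    refine ⟨hcard, fun a ha1 ha2 => ?_⟩
    have hlen : a - 1 < (L.sort (· ≤ ·)).length := by
      rw [Finset.length_sort]; omega
    have hrow : nthLiveRow B j a = (L.sort (· ≤ ·))[a-1] := by
      show ((liveCol B j).sort (· ≤ ·)).getD (a - 1) 0 = _
      exact List.getD_eq_getElem _ _ hlen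
    have hrowC : nthLiveRow C j a = f ((L.sort (· ≤ ·))[a-1]) := by
      show ((liveCol C j).sort (· ≤ ·)).getD (a - 1) 0 = _
      rw [hsort, List.getD_eq_getElem _ _ (by rwa [List.length_map]), List.getElem_map]
    have hmem : (L.sort (· ≤ ·))[a-1] ∈ L :=
      (Finset.mem_sort _).mp (List.getElem_mem hlen)
    by_cases hri : (L.sort (· ≤ ·))[a-1] = i
    · have hfr : f ((L.sort (· ≤ ·))[a-1]) = i - 1 := by simp [hfdef, hri]
      have hr1 : C.r (i - 1, j) = B.r (i, j) - 1 := by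
        rw [hcr, Function.update_self]
      rw [hrowC, hrow, hfr, hri, hr1]
      have hcast : ((i - 1 : ℕ) : ℤ) = (i : ℤ) - 1 := by omega
      rw [hcast]; ring
    · have hfr : f ((L.sort (· ≤ ·))[a-1]) = (L.sort (· ≤ ·))[a-1] := if_neg hri
      have hne : ((L.sort (· ≤ ·))[a-1], j) ≠ (i - 1, j) := by
        intro hp
        have h5 : (L.sort (· ≤ ·))[a-1] = i - 1 := (Prod.ext_iff.mp hp).1
        exact hi1L (h5 ▸ hmem)
      have hr1 : C.r ((L.sort (· ≤ ·))[a-1], j) = B.r ((L.sort (· ≤ ·))[a-1], j) := by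
        rw [hcr, Function.update_of_ne hne]
      rw [hrowC, hrow, hfr, hr1]
  · have hcc : liveCol C c = liveCol B c := by rw [hcol c, if_neg hc]
    refine ⟨by rw [hcc], fun a ha1 ha2 => ?_⟩
    have hrows : nthLiveRow C c a = nthLiveRow B c a := by
      show ((liveCol C c).sort (· ≤ ·)).getD (a - 1) 0 = _
      rw [hcc]; rfl
    have hr1 : C.r (nthLiveRow B c a, c) = B.r (nthLiveRow B c a, c) := by
      rw [hcr, Function.update_of_ne (fun hp => hc (Prod.ext_iff.mp hp).2)]
    rw [hrows, hr1]

lemma chain_invariant (B B' : BubblingDiagram) (h : InBD B B') (c : ℕ) :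
    (liveCol B' c).card = (liveCol B c).card ∧
    ∀ a, 1 ≤ a → a ≤ (liveCol B c).card →
      (nthLiveRow B' c a : ℤ) - B'.r (nthLiveRow B' c a, c) =
        (nthLiveRow B c a : ℤ) - B.r (nthLiveRow B c a, c) := by
  induction h with
  | refl => exact ⟨rfl, fun _ _ _ => rfl⟩
  | tail hPQ hstep ih =>
    obtain ⟨hc1, hc2⟩ := ih
    obtain ⟨hc1', hc2'⟩ := step_invariant _ _ hstep c
    refine ⟨hc1'.trans hc1, fun a ha1 ha2 => ?_⟩
    rw [hc2' a ha1 (by omega), hc2 a ha1 ha2]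

theorem stmt_16 (B B' : BubblingDiagram) (h : InBD B B') (j k aj ak : ℕ)
    (haj : 1 ≤ aj) (hak : 1 ≤ ak)
    (hj' : aj ≤ (liveCol B' j).card) (hk' : ak ≤ (liveCol B' k).card)
    (hlink : (nthLiveRow B' j aj : ℤ) - (nthLiveRow B' k ak : ℤ) =
      B'.r (nthLiveRow B' j aj, j) - B'.r (nthLiveRow B' k ak, k)) :
    aj ≤ (liveCol B j).card ∧ ak ≤ (liveCol B k).card ∧
      (nthLiveRow B j aj : ℤ) - (nthLiveRow B k ak : ℤ) =
        B.r (nthLiveRow B j aj, j) - B.r (nthLiveRow B k ak, k) := by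
  obtain ⟨hj1, hj2⟩ := chain_invariant B B' h j
  obtain ⟨hk1, hk2⟩ := chain_invariant B B' h k
  have hjc : aj ≤ (liveCol B j).card := by omega
  have hkc : ak ≤ (liveCol B k).card := by omega
  have e1 := hj2 aj haj hjc
  have e2 := hk2 ak hak hkc
  exact ⟨hjc, hkc, by linarith⟩
end
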